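/- arXiv:2510.08262 — 3 statements merged into one kernel-verified Lean document; each statement's English description precedes it below -/
import Mathlib

section
/- Let N be a positive integer, M a nonnegative integer, and n a nonnegative integer. Then the number of pairs of partitions (α, β) with |α| + |β| = n such that α has at most N parts each at most M and every part of β lies in the interval [M+1, M+N], equals the number of partitions of n with at most N parts. -/
/-- A partition: a finite nonincreasing list of positive integers. -/
structure Partn where
  parts : List ℕ
  sorted : parts.Pairwise (· ≥ ·)
  pos : ∀ x ∈ parts, 0 < x

namespace Partn

/-- The weight `|λ|` of a partition: the sum of its parts. -/
def wt (p : Partn) : ℕ := p.parts.sum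

/-- The length `ℓ(λ)`: the number of parts. -/
def len (p : Partn) : ℕ := p.parts.length

/-- The `j`-th largest part `λ_j` (1-indexed), with `λ_j = 0` for `j > ℓ(λ)`. -/
def part (p : Partn) (j : ℕ) : ℕ := p.parts.getD (j - 1) 0

/-- `f_j(λ)`: the number of parts of `λ` equal to `j`. -/
def freq (p : Partn) (j : ℕ) : ℕ := p.parts.count j

/-- The empty partition. -/
def empty : Partn := ⟨[], List.Pairwise.nil, by simp⟩

end Partn

namespace GaussRef
open Multiset

section MS
-- paste helpers via import later; for now assume available by copying
lemma filter_pos_sum (s : Multiset ℕ) : (s.filter (0 < ·)).sum = s.sum := by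
  induction s using Multiset.induction_on with
  | empty => simp
  | cons a s ih =>
    by_cases h : 0 < a <;> simp [Multiset.filter_cons, h, ih] <;> omega

lemma map_pred_sum (s : Multiset ℕ) (h : ∀ y ∈ s, 0 < y) :
    (s.map (· - 1)).sum + Multiset.card s = s.sum := by
  induction s using Multiset.induction_on with
  | empty => simp
  | cons a s ih =>
    have ha : 0 < a := h a (mem_cons_self ..)
    have ih' := ih (fun y hy => h y (mem_cons_of_mem hy))
    simp only [map_cons, sum_cons, card_cons]
    omega

lemma map_succ_sum (s : Multiset ℕ) : (s.map (· + 1)).sum = s.sum + Multiset.card s := by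
  induction s using Multiset.induction_on with
  | empty => simp
  | cons a s ih => simp only [map_cons, sum_cons, card_cons]; omega

lemma unsub (s : Multiset ℕ) (h : ∀ y ∈ s, 0 < y) :
    ((s.map (· - 1)).filter (0 < ·)).map (· + 1)
      + Multiset.replicate
          (Multiset.card s - Multiset.card ((s.map (· - 1)).filter (0 < ·))) 1 = s := by
  induction s using Multiset.induction_on with
  | empty => simp
  | cons a s ih =>
    have ha : 0 < a := h a (mem_cons_self ..)
    have ih' := ih (fun y hy => h y (mem_cons_of_mem hy))
    have hle : Multiset.card ((s.map (· - 1)).filter (0 < ·)) ≤ Multiset.card s :=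
      le_trans (Multiset.card_le_card (Multiset.filter_le _ _)) (by simp)
    by_cases h2 : 0 < a - 1
    · simp only [Multiset.map_cons, Multiset.filter_cons, if_pos h2, Multiset.map_add,
        Multiset.map_singleton, Multiset.card_add, Multiset.card_singleton,
        Multiset.card_cons, Multiset.singleton_add, Multiset.cons_add]
      rw [show a - 1 + 1 = a from by omega,
          show Multiset.card s + 1 - (Multiset.card ((s.map (· - 1)).filter (0 < ·)) + 1)
             = Multiset.card s - Multiset.card ((s.map (· - 1)).filter (0 < ·)) from by omega,
          ih']
    · have ha1 : a = 1 := by omega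
      simp only [Multiset.map_cons, Multiset.filter_cons, if_neg h2, Multiset.card_cons,
        zero_add]
      rw [show Multiset.card s + 1 - Multiset.card ((s.map (· - 1)).filter (0 < ·))
            = (Multiset.card s - Multiset.card ((s.map (· - 1)).filter (0 < ·))) + 1 from by omega,
          Multiset.replicate_succ, Multiset.add_cons, ih', ha1]

lemma erase_add_singleton (s : Multiset ℕ) (x : ℕ) : (s + {x}).erase x = s := by
  rw [add_comm, Multiset.singleton_add, Multiset.erase_cons_head]

end MS

abbrev St := Multiset ℕ × Multiset ℕ

variable (M N : ℕ)

def OK (x : St) : Prop :=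
  (∀ y ∈ x.1, 0 < y ∧ y ≤ M + 1) ∧ Multiset.card x.1 ≤ N ∧
  (∀ y ∈ x.2, M + 1 ≤ y ∧ y ≤ M + N + 1)

def fstep (x : St) : St :=
  if Multiset.card x.1 < N then (x.1 + {M+1}, x.2.erase (M+1))
  else ((x.1.map (· - 1)).filter (0 < ·), x.2.erase (M+1) + {M+N+1})

def gstep (x : St) : St :=
  if M+1 ∈ x.1 then (x.1.erase (M+1), x.2 + {M+1})
  else (x.1.map (· + 1) + Multiset.replicate (N - Multiset.card x.1) 1,
        x.2.erase (M+N+1) + {M+1})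

variable {M N}

lemma fstep_OK {x : St} (hx : OK M N x) : OK M N (fstep M N x) := by
  obtain ⟨ha, hc, hb⟩ := hx
  unfold fstep
  split
  · refine ⟨?_, ?_, ?_⟩
    · intro y hy
      rcases Multiset.mem_add.mp hy with h | h
      · exact ha y h
      · simp only [Multiset.mem_singleton] at h; omega
    · simp only [Multiset.card_add, Multiset.card_singleton]; omega
    · intro y hy; exact hb y (Multiset.mem_of_mem_erase hy)
  · refine ⟨?_, ?_, ?_⟩
    · intro y hy
      rw [Multiset.mem_filter] at hy
      obtain ⟨hy1, hy2⟩ := hy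
      obtain ⟨z, hz, rfl⟩ := Multiset.mem_map.mp hy1
      have := (ha z hz).2
      omega
    · calc Multiset.card ((x.1.map (· - 1)).filter (0 < ·))
          ≤ Multiset.card (x.1.map (· - 1)) :=
            Multiset.card_le_card (Multiset.filter_le _ _)
        _ = Multiset.card x.1 := by simp
        _ ≤ N := hc
    · intro y hy
      rcases Multiset.mem_add.mp hy with h | h
      · exact hb y (Multiset.mem_of_mem_erase h)
      · simp only [Multiset.mem_singleton] at h; omega

lemma fstep_sum {x : St} (hx : OK M N x) (hm : M+1 ∈ x.2) :
    (fstep M N x).1.sum + (fstep M N x).2.sum = x.1.sum + x.2.sum := by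
  obtain ⟨ha, hc, hb⟩ := hx
  have hb2 : x.2.sum = (M+1) + (x.2.erase (M+1)).sum := by
    conv_lhs => rw [← Multiset.cons_erase hm]
    simp
  unfold fstep
  split
  · simp only [Multiset.sum_add, Multiset.sum_singleton]
    omega
  · rename_i hcard
    have hcard' : Multiset.card x.1 = N := by omega
    have h1 : ((x.1.map (· - 1)).filter (0 < ·)).sum = (x.1.map (· - 1)).sum :=
      filter_pos_sum _
    have h2 := map_pred_sum x.1 (fun y hy => (ha y hy).1)
    simp only [Multiset.sum_add, Multiset.sum_singleton]
    omega

lemma gstep_OK {x : St} (hx : OK M N x) : OK M N (gstep M N x) := by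
  obtain ⟨ha, hc, hb⟩ := hx
  unfold gstep
  split
  · refine ⟨fun y hy => ha y (Multiset.mem_of_mem_erase hy), ?_, ?_⟩
    · exact le_trans (Multiset.card_le_card (Multiset.erase_le _ _)) hc
    · intro y hy
      rcases Multiset.mem_add.mp hy with h | h
      · exact hb y h
      · simp only [Multiset.mem_singleton] at h; omega
  · rename_i hmem
    refine ⟨?_, ?_, ?_⟩
    · intro y hy
      rcases Multiset.mem_add.mp hy with h | h
      · obtain ⟨z, hz, rfl⟩ := Multiset.mem_map.mp h
        have h1 := (ha z hz).2
        have h2 : z ≠ M + 1 := fun hzz => hmem (hzz ▸ hz)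
        omega
      · rw [Multiset.eq_of_mem_replicate h]; omega
    · simp only [Multiset.card_add, Multiset.card_map, Multiset.card_replicate]
      omega
    · intro y hy
      rcases Multiset.mem_add.mp hy with h | h
      · exact hb y (Multiset.mem_of_mem_erase h)
      · simp only [Multiset.mem_singleton] at h; omega

lemma gstep_sum {x : St} (hx : OK M N x)
    (hm : M+1 ∈ x.1 ∨ (M+1 ∉ x.1 ∧ M+N+1 ∈ x.2)) :
    (gstep M N x).1.sum + (gstep M N x).2.sum = x.1.sum + x.2.sum := by
  obtain ⟨ha, hc, hb⟩ := hx
  unfold gstep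
  split
  · rename_i hmem
    have h1 : x.1.sum = (M+1) + (x.1.erase (M+1)).sum := by
      conv_lhs => rw [← Multiset.cons_erase hmem]
      simp
    simp only [Multiset.sum_add, Multiset.sum_singleton]
    omega
  · rename_i hmem
    rcases hm with h | ⟨_, hm2⟩
    · exact absurd h hmem
    · have h1 : x.2.sum = (M+N+1) + (x.2.erase (M+N+1)).sum := by
        conv_lhs => rw [← Multiset.cons_erase hm2]
        simp
      have h2 := map_succ_sum x.1
      simp only [Multiset.sum_add, Multiset.sum_singleton, Multiset.sum_replicate,
        smul_eq_mul, mul_one]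
      omega

lemma g_f {x : St} (hx : OK M N x) (hm : M+1 ∈ x.2) :
    gstep M N (fstep M N x) = x := by
  obtain ⟨ha, hc, hb⟩ := hx
  obtain ⟨a, b⟩ := x
  simp only at ha hc hb hm
  unfold fstep
  split
  · unfold gstep
    have hmem : M+1 ∈ a + {M+1} := by simp
    simp only at hmem ⊢
    rw [if_pos hmem, Prod.mk.injEq]
    constructor
    · exact erase_add_singleton a (M+1)
    · rw [add_comm, Multiset.singleton_add, Multiset.cons_erase hm]
  · rename_i hcard
    simp only at hcard
    have hcard' : Multiset.card a = N := by omega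
    unfold gstep
    have hnm : M+1 ∉ (a.map (· - 1)).filter (0 < ·) := by
      intro hmm
      rw [Multiset.mem_filter] at hmm
      obtain ⟨z, hz, hzz⟩ := Multiset.mem_map.mp hmm.1
      have := (ha z hz).2
      omega
    simp only at hnm ⊢
    rw [if_neg hnm, Prod.mk.injEq]
    constructor
    · rw [← hcard']
      exact unsub a (fun y hy => (ha y hy).1)
    · rw [erase_add_singleton, add_comm, Multiset.singleton_add, Multiset.cons_erase hm]


lemma f_g {x : St} (hx : OK M N x)
    (hm : M+1 ∈ x.1 ∨ (M+1 ∉ x.1 ∧ M+N+1 ∈ x.2)) :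
    fstep M N (gstep M N x) = x := by
  obtain ⟨ha, hc, hb⟩ := hx
  obtain ⟨a, b⟩ := x
  simp only at ha hc hb hm
  unfold gstep
  split
  · rename_i hmem
    simp only at hmem
    unfold fstep
    have hcd : Multiset.card (a.erase (M+1)) < N := by
      rw [Multiset.card_erase_of_mem hmem, Nat.pred_eq_sub_one]
      have h1 : 1 ≤ Multiset.card a := by
        rw [Nat.one_le_iff_ne_zero]
        intro h0
        rw [Multiset.card_eq_zero.mp h0] at hmem
        simp at hmem
      omega
    simp only
    rw [if_pos hcd, Prod.mk.injEq]
    constructor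
    · rw [add_comm, Multiset.singleton_add, Multiset.cons_erase hmem]
    · exact erase_add_singleton b (M+1)
  · rename_i hmem
    simp only at hmem
    rcases hm with h | ⟨_, hm2⟩
    · exact absurd h hmem
    unfold fstep
    have hcd : Multiset.card (a.map (· + 1) + Multiset.replicate (N - Multiset.card a) 1) = N := by
      simp only [Multiset.card_add, Multiset.card_map, Multiset.card_replicate]
      omega
    simp only
    rw [if_neg (by omega : ¬ Multiset.card (a.map (· + 1) + Multiset.replicate (N - Multiset.card a) 1) < N),
      Prod.mk.injEq]
    constructor
    · have h1 : (a.map (· + 1) + Multiset.replicate (N - Multiset.card a) 1).map (· - 1)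
          = a + Multiset.replicate (N - Multiset.card a) 0 := by
        rw [Multiset.map_add, Multiset.map_map, Multiset.map_replicate]
        congr 1
        · have : ((· - 1) ∘ (· + 1) : ℕ → ℕ) = id := by
            funext y; simp
          rw [this, Multiset.map_id]
      rw [h1, Multiset.filter_add]
      have h2 : Multiset.filter (0 < ·) a = a :=
        Multiset.filter_eq_self.mpr (fun y hy => (ha y hy).1)
      have h3 : Multiset.filter (0 < ·) (Multiset.replicate (N - Multiset.card a) 0) = 0 :=
        Multiset.filter_eq_nil.mpr (fun y hy => by rw [Multiset.eq_of_mem_replicate hy]; omega)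
      rw [h2, h3, add_zero]
    · rw [erase_add_singleton, add_comm, Multiset.singleton_add, Multiset.cons_erase hm2]

variable (M N)

def Fwd (hN : 0 < N) (x : St) : St :=
  if h : M+1 ∈ x.2 then Fwd hN (fstep M N x) else x
termination_by Multiset.count (M+1) x.2
decreasing_by
  have hc := Multiset.count_pos.mpr h
  have hne : ¬ (N = 0) := by omega
  unfold fstep
  split <;> simp [Multiset.count_erase_self, Multiset.count_singleton, hne] <;> omega

def Inv (hN : 0 < N) (x : St) : St :=
  if M+1 ∈ x.1 then Inv hN (gstep M N x)
  else if M+N+1 ∈ x.2 then Inv hN (gstep M N x)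
  else x
termination_by (Multiset.count (M+N+1) x.2, Multiset.count (M+1) x.1)
decreasing_by
  · apply Prod.Lex.right'
    · unfold gstep
      have hne : ¬ (M+N+1 = M+1) := by omega
      split
      · simp [Multiset.count_singleton, hne]; omega
      · simp_all
    · unfold gstep
      split
      · have hc := Multiset.count_pos.mpr (by assumption : M+1 ∈ x.1)
        simp [Multiset.count_erase_self]; omega
      · simp_all
  · apply Prod.Lex.left
    rename_i h1 h2
    have hc := Multiset.count_pos.mpr h2
    have hne : ¬ (M+N+1 = M+1) := by omega
    unfold gstep
    split
    · simp_all
    · simp [Multiset.count_erase_self, Multiset.count_singleton, hne]; split_ifs <;> omega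

variable {M N}

lemma Fwd_mem_eq (hN : 0 < N) {x : St} (h : M+1 ∈ x.2) :
    Fwd M N hN x = Fwd M N hN (fstep M N x) := by
  conv_lhs => rw [Fwd.eq_def]
  rw [dif_pos h]

lemma Fwd_stop (hN : 0 < N) {x : St} (h : M+1 ∉ x.2) : Fwd M N hN x = x := by
  rw [Fwd.eq_def, dif_neg h]

lemma Inv_go (hN : 0 < N) {x : St} (h : M+1 ∈ x.1 ∨ M+N+1 ∈ x.2) :
    Inv M N hN x = Inv M N hN (gstep M N x) := by
  conv_lhs => rw [Inv.eq_def]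
  by_cases h1 : M+1 ∈ x.1
  · rw [if_pos h1]
  · rw [if_neg h1, if_pos (h.resolve_left h1)]

lemma Inv_stop (hN : 0 < N) {x : St} (h1 : M+1 ∉ x.1) (h2 : M+N+1 ∉ x.2) :
    Inv M N hN x = x := by
  rw [Inv.eq_def, if_neg h1, if_neg h2]

lemma fstep_count (hN : 0 < N) {x : St} (h : M+1 ∈ x.2) :
    Multiset.count (M+1) (fstep M N x).2 + 1 = Multiset.count (M+1) x.2 := by
  have hc := Multiset.count_pos.mpr h
  have hne : ¬ (M+N+1 = M+1) := by omega
  have hN0 : ¬ (N = 0) := by omega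
  unfold fstep
  split <;>
    simp [Multiset.count_erase_self, Multiset.count_singleton, hne, hN0] <;> omega

lemma fstep_disj {x : St} :
    M+1 ∈ (fstep M N x).1 ∨ M+N+1 ∈ (fstep M N x).2 := by
  unfold fstep
  split
  · left; simp
  · right; simp

lemma gstep_memb {x : St} : M+1 ∈ (gstep M N x).2 := by
  unfold gstep
  split <;> simp

lemma Fwd_spec (hN : 0 < N) : ∀ (q : ℕ) (x : St),
    Multiset.count (M+1) x.2 ≤ q → OK M N x →
    OK M N (Fwd M N hN x) ∧
      (Fwd M N hN x).1.sum + (Fwd M N hN x).2.sum = x.1.sum + x.2.sum ∧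
      M+1 ∉ (Fwd M N hN x).2 := by
  intro q
  induction q with
  | zero =>
    intro x hq hx
    have h : M+1 ∉ x.2 := fun hm => by have := Multiset.count_pos.mpr hm; omega
    rw [Fwd_stop hN h]
    exact ⟨hx, rfl, h⟩
  | succ q ih =>
    intro x hq hx
    by_cases h : M+1 ∈ x.2
    · rw [Fwd_mem_eq hN h]
      have hcount := fstep_count hN h
      obtain ⟨h1, h2, h3⟩ := ih (fstep M N x) (by omega) (fstep_OK hx)
      exact ⟨h1, by rw [h2, fstep_sum hx h], h3⟩
    · rw [Fwd_stop hN h]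
      exact ⟨hx, rfl, h⟩

lemma Inv_Fwd (hN : 0 < N) : ∀ (q : ℕ) (x : St),
    Multiset.count (M+1) x.2 ≤ q → OK M N x →
    Inv M N hN (Fwd M N hN x) = Inv M N hN x := by
  intro q
  induction q with
  | zero =>
    intro x hq hx
    have h : M+1 ∉ x.2 := fun hm => by have := Multiset.count_pos.mpr hm; omega
    rw [Fwd_stop hN h]
  | succ q ih =>
    intro x hq hx
    by_cases h : M+1 ∈ x.2
    · rw [Fwd_mem_eq hN h]
      have hcount := fstep_count hN h
      rw [ih (fstep M N x) (by omega) (fstep_OK hx)]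
      rw [Inv_go hN fstep_disj, g_f hx h]
    · rw [Fwd_stop hN h]

def mea (x : St) : ℕ :=
  Multiset.count (M+N+1) x.2 * (N+1) + Multiset.count (M+1) x.1

lemma gstep_mea (hN : 0 < N) {x : St} (hx : OK M N x)
    (hm : M+1 ∈ x.1 ∨ (M+1 ∉ x.1 ∧ M+N+1 ∈ x.2)) :
    mea (M := M) (N := N) (gstep M N x) + 1 ≤ mea (M := M) (N := N) x := by
  obtain ⟨ha, hc, hb⟩ := hx
  have hne : ¬ (M+N+1 = M+1) := by omega
  unfold mea gstep
  split
  · rename_i hmem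
    have hcp := Multiset.count_pos.mpr hmem
    simp only [Multiset.count_add, Multiset.count_erase_self,
      Multiset.count_singleton, if_neg hne, add_zero]
    omega
  · rename_i hmem
    rcases hm with h | ⟨_, hm2⟩
    · exact absurd h hmem
    have hcp := Multiset.count_pos.mpr hm2
    have h0 : Multiset.count (M+1) x.1 = 0 := Multiset.count_eq_zero.mpr hmem
    have hcd : Multiset.count (M+1) (x.1.map (· + 1))
        + Multiset.count (M+1) (Multiset.replicate (N - Multiset.card x.1) 1) ≤ N := by
      rw [← Multiset.count_add]
      calc Multiset.count (M+1) (x.1.map (· + 1) + Multiset.replicate (N - Multiset.card x.1) 1)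
          ≤ Multiset.card (x.1.map (· + 1) + Multiset.replicate (N - Multiset.card x.1) 1) :=
            Multiset.count_le_card _ _
        _ = N := by
            simp only [Multiset.card_add, Multiset.card_map, Multiset.card_replicate]
            omega
    simp only [Multiset.count_add, Multiset.count_erase_self,
      Multiset.count_singleton, if_pos rfl, if_neg hne, add_zero]
    rw [Nat.sub_one_mul]
    have hK : N+1 ≤ Multiset.count (M+N+1) x.2 * (N+1) :=
      Nat.le_mul_of_pos_left _ hcp
    omega

lemma Inv_spec (hN : 0 < N) : ∀ (q : ℕ) (x : St),
    mea (M := M) (N := N) x ≤ q → OK M N x →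
    OK M N (Inv M N hN x) ∧
      (Inv M N hN x).1.sum + (Inv M N hN x).2.sum = x.1.sum + x.2.sum ∧
      M+1 ∉ (Inv M N hN x).1 ∧ M+N+1 ∉ (Inv M N hN x).2 := by
  intro q
  induction q with
  | zero =>
    intro x hq hx
    have h1 : M+1 ∉ x.1 := fun hm => by
      have := Multiset.count_pos.mpr hm; unfold mea at hq; omega
    have h2 : M+N+1 ∉ x.2 := fun hm => by
      have := Multiset.count_pos.mpr hm; unfold mea at hq; nlinarith
    rw [Inv_stop hN h1 h2]
    exact ⟨hx, rfl, h1, h2⟩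
  | succ q ih =>
    intro x hq hx
    by_cases h1 : M+1 ∈ x.1
    · have hm : M+1 ∈ x.1 ∨ (M+1 ∉ x.1 ∧ M+N+1 ∈ x.2) := Or.inl h1
      rw [Inv_go hN (Or.inl h1)]
      have := gstep_mea hN hx hm
      obtain ⟨k1, k2, k3⟩ := ih (gstep M N x) (by omega) (gstep_OK hx)
      exact ⟨k1, by rw [k2, gstep_sum hx hm], k3⟩
    · by_cases h2 : M+N+1 ∈ x.2
      · have hm : M+1 ∈ x.1 ∨ (M+1 ∉ x.1 ∧ M+N+1 ∈ x.2) := Or.inr ⟨h1, h2⟩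
        rw [Inv_go hN (Or.inr h2)]
        have := gstep_mea hN hx hm
        obtain ⟨k1, k2, k3⟩ := ih (gstep M N x) (by omega) (gstep_OK hx)
        exact ⟨k1, by rw [k2, gstep_sum hx hm], k3⟩
      · rw [Inv_stop hN h1 h2]
        exact ⟨hx, rfl, h1, h2⟩

lemma Fwd_Inv (hN : 0 < N) : ∀ (q : ℕ) (x : St),
    mea (M := M) (N := N) x ≤ q → OK M N x →
    Fwd M N hN (Inv M N hN x) = Fwd M N hN x := by
  intro q
  induction q with
  | zero =>
    intro x hq hx
    have h1 : M+1 ∉ x.1 := fun hm => by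
      have := Multiset.count_pos.mpr hm; unfold mea at hq; omega
    have h2 : M+N+1 ∉ x.2 := fun hm => by
      have := Multiset.count_pos.mpr hm; unfold mea at hq; nlinarith
    rw [Inv_stop hN h1 h2]
  | succ q ih =>
    intro x hq hx
    by_cases h1 : M+1 ∈ x.1
    · have hm : M+1 ∈ x.1 ∨ (M+1 ∉ x.1 ∧ M+N+1 ∈ x.2) := Or.inl h1
      rw [Inv_go hN (Or.inl h1)]
      have := gstep_mea hN hx hm
      rw [ih (gstep M N x) (by omega) (gstep_OK hx)]
      rw [Fwd_mem_eq hN gstep_memb, f_g hx hm]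
    · by_cases h2 : M+N+1 ∈ x.2
      · have hm : M+1 ∈ x.1 ∨ (M+1 ∉ x.1 ∧ M+N+1 ∈ x.2) := Or.inr ⟨h1, h2⟩
        rw [Inv_go hN (Or.inr h2)]
        have := gstep_mea hN hx hm
        rw [ih (gstep M N x) (by omega) (gstep_OK hx)]
        rw [Fwd_mem_eq hN gstep_memb, f_g hx hm]
      · rw [Inv_stop hN h1 h2]

def Tpair (M N n : ℕ) : Set St :=
  {x : St | (∀ y ∈ x.1, 0 < y) ∧ (∀ y ∈ x.2, 0 < y) ∧ x.1.sum + x.2.sum = n ∧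
    Multiset.card x.1 ≤ N ∧ (∀ y ∈ x.1, y ≤ M) ∧ (∀ y ∈ x.2, M+1 ≤ y ∧ y ≤ M+N)}

def Tsingle (N n : ℕ) : Set (Multiset ℕ) :=
  {a : Multiset ℕ | (∀ y ∈ a, 0 < y) ∧ a.sum = n ∧ Multiset.card a ≤ N}

variable {n : ℕ}

lemma OK_of_mem {x : St} (h : x ∈ Tpair M N n) : OK M N x := by
  obtain ⟨h1, h2, h3, h4, h5, h6⟩ := h
  exact ⟨fun y hy => ⟨h1 y hy, le_trans (h5 y hy) (by omega)⟩, h4,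
    fun y hy => ⟨(h6 y hy).1, by have := (h6 y hy).2; omega⟩⟩

lemma OK_of_mem_succ {x : St} (h : x ∈ Tpair (M+1) N n) : OK M N x := by
  obtain ⟨h1, h2, h3, h4, h5, h6⟩ := h
  refine ⟨fun y hy => ⟨h1 y hy, h5 y hy⟩, h4, fun y hy => ?_⟩
  have := h6 y hy
  omega

lemma step_ncard (hN : 0 < N) : (Tpair M N n).ncard = (Tpair (M+1) N n).ncard := by
  have himg : (Fwd M N hN) '' (Tpair M N n) = Tpair (M+1) N n := by
    apply Set.Subset.antisymm
    · rintro _ ⟨x, hx, rfl⟩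
      have hOK := OK_of_mem hx
      obtain ⟨⟨k1, k2, k3⟩, ksum, knm⟩ :=
        Fwd_spec hN (Multiset.count (M+1) x.2) x le_rfl hOK
      obtain ⟨h1, h2, h3, h4, h5, h6⟩ := hx
      refine ⟨fun y hy => (k1 y hy).1, fun y hy => ?_, by rw [ksum]; exact h3, k2,
        fun y hy => (k1 y hy).2, fun y hy => ?_⟩
      · have := (k3 y hy).1; omega
      · have hb := k3 y hy
        have hne : y ≠ M+1 := fun hh => knm (hh ▸ hy)
        omega
    · intro z hz
      have hOK := OK_of_mem_succ hz
      obtain ⟨h1, h2, h3, h4, h5, h6⟩ := hz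
      obtain ⟨⟨k1, k2, k3⟩, ksum, knm1, knm2⟩ :=
        Inv_spec hN (mea (M := M) (N := N) z) z le_rfl hOK
      refine ⟨Inv M N hN z, ⟨fun y hy => (k1 y hy).1, fun y hy => ?_,
        by rw [ksum]; exact h3, k2, fun y hy => ?_, fun y hy => ?_⟩, ?_⟩
      · have := (k3 y hy).1; omega
      · have := (k1 y hy).2
        have hne : y ≠ M+1 := fun hh => knm1 (hh ▸ hy)
        omega
      · have := k3 y hy
        have hne : y ≠ M+N+1 := fun hh => knm2 (hh ▸ hy)
        omega
      · rw [Fwd_Inv hN (mea (M := M) (N := N) z) z le_rfl hOK]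
        apply Fwd_stop hN
        intro hmm
        have := (h6 _ hmm).1
        omega
  have hinj : Set.InjOn (Fwd M N hN) (Tpair M N n) := by
    intro x hx y hy hxy
    have fix : ∀ w, w ∈ Tpair M N n → Inv M N hN (Fwd M N hN w) = w := by
      intro w hw
      rw [Inv_Fwd hN (Multiset.count (M+1) w.2) w le_rfl (OK_of_mem hw)]
      obtain ⟨h1, h2, h3, h4, h5, h6⟩ := hw
      apply Inv_stop hN
      · intro hmm; have := h5 _ hmm; omega
      · intro hmm; have := (h6 _ hmm).2; omega
    rw [← fix x hx, ← fix y hy, hxy]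
  rw [← himg, Set.ncard_image_of_injOn hinj]

lemma base_ncard (hMn : n ≤ M) : (Tpair M N n).ncard = (Tsingle N n).ncard := by
  have himg : (fun a => (a, (0 : Multiset ℕ))) '' (Tsingle N n) = Tpair M N n := by
    apply Set.Subset.antisymm
    · rintro _ ⟨a, ⟨h1, h2, h3⟩, rfl⟩
      refine ⟨h1, by simp, by simpa using h2, h3, fun y hy => ?_, by simp⟩
      have : y ≤ a.sum := Multiset.single_le_sum (fun _ _ => Nat.zero_le _) y hy
      omega
    · rintro ⟨a, b⟩ ⟨h1, h2, h3, h4, h5, h6⟩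
      simp only at h1 h2 h3 h4 h5 h6
      have hb : b = 0 := by
        by_contra hb0
        obtain ⟨y, hy⟩ := Multiset.exists_mem_of_ne_zero hb0
        have hy1 := (h6 y hy).1
        have hy2 : y ≤ b.sum := Multiset.single_le_sum (fun _ _ => Nat.zero_le _) y hy
        omega
      subst hb
      exact ⟨a, ⟨h1, by simpa using h3, h4⟩, rfl⟩
  have hinj : Set.InjOn (fun a => (a, (0 : Multiset ℕ))) (Tsingle N n) := by
    intro x _ y _ h
    simpa using h
  rw [← himg, Set.ncard_image_of_injOn hinj]

lemma count_all (N n : ℕ) (hN : 0 < N) (M : ℕ) :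
    (Tpair M N n).ncard = (Tsingle N n).ncard := by
  by_cases h : n ≤ M
  · exact base_ncard h
  · rw [step_ncard hN]
    exact count_all N n hN (M+1)
termination_by n - M
decreasing_by omega


def toMS (p : Partn) : Multiset ℕ := ↑p.parts

lemma toMS_inj : Function.Injective toMS := by
  intro p q h
  have hperm : p.parts.Perm q.parts := Multiset.coe_eq_coe.mp h
  haveI : IsAntisymm ℕ (· ≥ ·) := ⟨fun a b h1 h2 => le_antisymm h2 h1⟩
  have heq := List.Perm.eq_of_pairwise (fun a b _ _ h1 h2 => le_antisymm h2 h1) p.sorted q.sorted hperm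
  cases p; cases q; simpa using heq

def ofMS (m : Multiset ℕ) (h : ∀ y ∈ m, 0 < y) : Partn :=
  ⟨(m.sort (· ≤ ·)).reverse,
   List.pairwise_reverse.mpr (Multiset.pairwise_sort m (· ≤ ·)),
   fun x hx => h x (by
     rw [List.mem_reverse] at hx
     exact (Multiset.mem_sort _).mp hx)⟩

lemma toMS_ofMS (m : Multiset ℕ) (h : ∀ y ∈ m, 0 < y) : toMS (ofMS m h) = m := by
  show ((m.sort (· ≤ ·)).reverse : Multiset ℕ) = m
  rw [Multiset.coe_reverse, Multiset.sort_eq]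

lemma ofMS_wt (m : Multiset ℕ) (h : ∀ y ∈ m, 0 < y) : (ofMS m h).wt = m.sum := by
  show (toMS (ofMS m h)).sum = m.sum
  rw [toMS_ofMS]

lemma ofMS_len (m : Multiset ℕ) (h : ∀ y ∈ m, 0 < y) :
    (ofMS m h).len = Multiset.card m := by
  show Multiset.card (toMS (ofMS m h)) = Multiset.card m
  rw [toMS_ofMS]

lemma ofMS_mem {m : Multiset ℕ} {h : ∀ y ∈ m, 0 < y} {x : ℕ} :
    x ∈ (ofMS m h).parts ↔ x ∈ m := by
  show x ∈ (toMS (ofMS m h)) ↔ x ∈ m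
  rw [toMS_ofMS]

end GaussRef

/-- Theorem 1.2 (restated): the number of pairs `(α, β)` with `|α| + |β| = n`,
`α` having at most `N` parts each at most `M`, and every part of `β` lying in
`[M+1, M+N]`, equals the number of partitions of `n` with at most `N` parts. -/
theorem gaussian_refinement (M N n : ℕ) (hN : 0 < N) :
    {p : Partn × Partn | p.1.wt + p.2.wt = n ∧ p.1.len ≤ N ∧
        (∀ x ∈ p.1.parts, x ≤ M) ∧
        (∀ x ∈ p.2.parts, M + 1 ≤ x ∧ x ≤ M + N)}.ncard =
      {g : Partn | g.wt = n ∧ g.len ≤ N}.ncard := by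
  classical
  set S : Set (Partn × Partn) := {p : Partn × Partn | p.1.wt + p.2.wt = n ∧ p.1.len ≤ N ∧
        (∀ x ∈ p.1.parts, x ≤ M) ∧
        (∀ x ∈ p.2.parts, M + 1 ≤ x ∧ x ≤ M + N)} with hS
  set S2 : Set Partn := {g : Partn | g.wt = n ∧ g.len ≤ N} with hS2
  have hFinj : Function.Injective
      (fun p : Partn × Partn => ((GaussRef.toMS p.1, GaussRef.toMS p.2) : GaussRef.St)) := by
    intro p q h
    exact Prod.ext (GaussRef.toMS_inj (congrArg Prod.fst h))
      (GaussRef.toMS_inj (congrArg Prod.snd h))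
  have himg : (fun p : Partn × Partn => ((GaussRef.toMS p.1, GaussRef.toMS p.2) : GaussRef.St))
      '' S = GaussRef.Tpair M N n := by
    apply Set.Subset.antisymm
    · rintro _ ⟨p, ⟨hw, hl, ha, hb⟩, rfl⟩
      exact ⟨p.1.pos, p.2.pos, hw, hl, ha, hb⟩
    · rintro ⟨a, b⟩ ⟨h1, h2, h3, h4, h5, h6⟩
      simp only at h1 h2 h3 h4 h5 h6
      refine ⟨(GaussRef.ofMS a h1, GaussRef.ofMS b h2), ⟨?_, ?_, ?_, ?_⟩, ?_⟩
      · show (GaussRef.ofMS a h1).wt + (GaussRef.ofMS b h2).wt = n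
        rw [GaussRef.ofMS_wt, GaussRef.ofMS_wt]
        exact h3
      · show (GaussRef.ofMS a h1).len ≤ N
        rw [GaussRef.ofMS_len]
        exact h4
      · intro x hx
        exact h5 x ((GaussRef.ofMS_mem (m := a) (h := h1)).mp hx)
      · intro x hx
        exact h6 x ((GaussRef.ofMS_mem (m := b) (h := h2)).mp hx)
      · exact Prod.ext (GaussRef.toMS_ofMS a h1) (GaussRef.toMS_ofMS b h2)
  have himg2 : GaussRef.toMS '' S2 = GaussRef.Tsingle N n := by
    apply Set.Subset.antisymm
    · rintro _ ⟨g, ⟨hw, hl⟩, rfl⟩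
      exact ⟨g.pos, hw, hl⟩
    · rintro a ⟨h1, h2, h3⟩
      refine ⟨GaussRef.ofMS a h1, ⟨?_, ?_⟩, GaussRef.toMS_ofMS a h1⟩
      · rw [GaussRef.ofMS_wt]; exact h2
      · rw [GaussRef.ofMS_len]; exact h3
  have e1 : S.ncard = (GaussRef.Tpair M N n).ncard := by
    rw [← himg, Set.ncard_image_of_injective _ hFinj]
  have e2 : S2.ncard = (GaussRef.Tsingle N n).ncard := by
    rw [← himg2, Set.ncard_image_of_injective _ GaussRef.toMS_inj]
  rw [e1, e2, GaussRef.count_all N n hN M]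
end

section
/- Let M ≥ 0 and N ≥ 1 be integers. There exists a bijection F from the set of pairs of partitions (α, γ) in which every part of α is at most M+N and γ has at most N parts each at most M, onto the set of pairs of partitions (ξ, δ) in which ξ has at most N parts and every part of δ is at most M, such that whenever F(α, γ) = (ξ, δ): (i) |α| + |γ| = |ξ| + |δ|, and (ii) the multiset of parts of α that are at most M coincides with the multiset of parts of δ. -/
namespace AlgZ

/-- shrink: subtract 1 from every part, dropping zeros. -/
def shrink (s : Multiset ℕ) : Multiset ℕ := (s.map (· - 1)).filter (0 < ·)

/-- grow: pad with zeros to k parts, then add 1 to every part. -/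
def grow (k : ℕ) (s : Multiset ℕ) : Multiset ℕ :=
  (s + Multiset.replicate (k - s.card) 0).map (· + 1)

lemma filter_pos_sum (t : Multiset ℕ) : (t.filter (0 < ·)).sum = t.sum := by
  conv_rhs => rw [← Multiset.filter_add_not (0 < ·) t]
  rw [Multiset.sum_add]
  have h : t.filter (fun a => ¬ 0 < a) = Multiset.replicate (t.count 0) 0 := by
    rw [Multiset.filter_congr (q := Eq 0) (fun x _ => by constructor <;> omega)]
    exact Multiset.filter_eq t 0
  rw [h]
  simp

lemma filter_pos_add (t : Multiset ℕ) :
    t.filter (0 < ·) + Multiset.replicate (t.count 0) 0 = t := by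
  have h : t.filter (fun a => ¬ 0 < a) = Multiset.replicate (t.count 0) 0 := by
    rw [Multiset.filter_congr (q := Eq 0) (fun x _ => by constructor <;> omega)]
    exact Multiset.filter_eq t 0
  rw [← h, Multiset.filter_add_not]

lemma grow_pos (k : ℕ) (s : Multiset ℕ) : ∀ x ∈ grow k s, 0 < x := by
  intro x hx
  obtain ⟨y, _, rfl⟩ := Multiset.mem_map.mp hx
  omega

lemma grow_card (k : ℕ) (s : Multiset ℕ) (h : s.card ≤ k) : (grow k s).card = k := by
  simp [grow]; omega

lemma sum_map_succ (t : Multiset ℕ) : (t.map (· + 1)).sum = t.sum + t.card := by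
  induction t using Multiset.induction with
  | empty => simp
  | cons a t ih => simp only [Multiset.map_cons, Multiset.sum_cons, Multiset.card_cons, ih]; omega

lemma grow_sum (k : ℕ) (s : Multiset ℕ) (h : s.card ≤ k) : (grow k s).sum = s.sum + k := by
  unfold grow
  rw [sum_map_succ]
  simp
  omega

lemma grow_le (k M : ℕ) (hM : 0 < M) (s : Multiset ℕ) (h : ∀ x ∈ s, x < M) : ∀ x ∈ grow k s, x ≤ M := by
  intro x hx
  obtain ⟨y, hy, rfl⟩ := Multiset.mem_map.mp hx
  rcases Multiset.mem_add.mp hy with h' | h'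
  · exact h y h'
  · have := Multiset.eq_of_mem_replicate h'; omega

lemma shrink_pos (s : Multiset ℕ) : ∀ x ∈ shrink s, 0 < x := fun x hx =>
  (Multiset.of_mem_filter hx)

lemma shrink_card_le (s : Multiset ℕ) : (shrink s).card ≤ s.card := by
  calc (shrink s).card ≤ (s.map (· - 1)).card := Multiset.card_le_card (Multiset.filter_le _ _)
  _ = s.card := Multiset.card_map _ _

lemma shrink_sum (s : Multiset ℕ) (hs : ∀ x ∈ s, 0 < x) :
    (shrink s).sum + s.card = s.sum := by
  unfold shrink
  rw [filter_pos_sum]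
  induction s using Multiset.induction with
  | empty => simp
  | cons a t ih =>
    simp only [Multiset.map_cons, Multiset.sum_cons, Multiset.card_cons]
    have ha : 0 < a := hs a (Multiset.mem_cons_self a t)
    have := ih (fun x hx => hs x (Multiset.mem_cons_of_mem hx))
    omega

lemma shrink_lt (M : ℕ) (s : Multiset ℕ) (h : ∀ x ∈ s, x ≤ M) : ∀ x ∈ shrink s, x < M := by
  intro x hx
  have hpos := Multiset.of_mem_filter hx
  obtain ⟨y, hy, rfl⟩ := Multiset.mem_map.mp (Multiset.mem_filter.mp hx).1
  have := h y hy
  omega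

lemma shrink_grow (k : ℕ) (s : Multiset ℕ) (hs : ∀ x ∈ s, 0 < x) : shrink (grow k s) = s := by
  unfold shrink grow
  rw [Multiset.map_map]
  have : ((· - 1) ∘ (· + 1) : ℕ → ℕ) = id := funext fun x => by simp
  rw [this, Multiset.map_id, Multiset.filter_add]
  have h1 : (s.filter (0 < ·)) = s := Multiset.filter_eq_self.mpr hs
  have h2 : (Multiset.replicate (k - s.card) 0).filter (0 < ·) = 0 := by
    rw [Multiset.filter_eq_nil]
    intro a ha
    have := Multiset.eq_of_mem_replicate ha; omega
  rw [h1, h2, add_zero]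

lemma grow_shrink (k : ℕ) (s : Multiset ℕ) (h : s.card = k) (hs : ∀ x ∈ s, 0 < x) :
    grow k (shrink s) = s := by
  unfold grow shrink
  set y := s.map (· - 1) with hy
  have hcard : y.card = k := by rw [hy, Multiset.card_map, h]
  have hk : (y.filter (0 < ·)).card + y.count 0 = k := by
    have := congrArg Multiset.card (filter_pos_add y)
    simp only [Multiset.card_add, Multiset.card_replicate] at this
    omega
  have hrep : k - (y.filter (0 < ·)).card = y.count 0 := by omega
  rw [hrep, filter_pos_add]
  rw [hy, Multiset.map_map]
  have : ((· + 1) ∘ (· - 1) : ℕ → ℕ) = fun x => x - 1 + 1 := rfl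
  rw [this]
  conv_rhs => rw [← Multiset.map_id s]
  apply Multiset.map_congr rfl
  intro x hx
  have := hs x hx
  simp; omega


/-- Left fiber: pairs (b, c), b has parts in (M, M+N], c has at most N parts each ≤ M,
    total weight n. -/
def Fib1 (M N n : ℕ) :=
  {p : Multiset ℕ × Multiset ℕ //
    (∀ x ∈ p.1, M < x ∧ x ≤ M + N) ∧ (∀ x ∈ p.2, 0 < x) ∧ p.2.card ≤ N ∧
      (∀ x ∈ p.2, x ≤ M) ∧ p.1.sum + p.2.sum = n}

/-- Right fiber: partitions with at most N parts and weight n. -/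
def Fib2 (N n : ℕ) :=
  {s : Multiset ℕ // (∀ x ∈ s, 0 < x) ∧ s.card ≤ N ∧ s.sum = n}

lemma card_le_sum (s : Multiset ℕ) (hs : ∀ x ∈ s, 0 < x) : s.card ≤ s.sum := by
  induction s using Multiset.induction with
  | empty => simp
  | cons a t ih =>
    simp only [Multiset.card_cons, Multiset.sum_cons]
    have := hs a (Multiset.mem_cons_self a t)
    have := ih (fun x hx => hs x (Multiset.mem_cons_of_mem hx))
    omega

lemma mem_le_sum (s : Multiset ℕ) (x : ℕ) (hx : x ∈ s) : x ≤ s.sum := by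
  obtain ⟨t, rfl⟩ := Multiset.exists_cons_of_mem hx
  simp

/-- Degenerate case: when n ≤ N, weight-n fibers don't change from N to N+1. -/
def T1 (M N n : ℕ) (hn : n ≤ N) : Fib1 M (N + 1) n ≃ Fib1 M N n where
  toFun p := ⟨p.val, by
    obtain ⟨h1, h2, h3, h4, h5⟩ := p.prop
    refine ⟨fun x hx => ⟨(h1 x hx).1, ?_⟩, h2, ?_, h4, h5⟩
    · have := mem_le_sum _ _ hx; omega
    · have := card_le_sum _ h2; omega⟩
  invFun p := ⟨p.val, by
    obtain ⟨h1, h2, h3, h4, h5⟩ := p.prop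
    exact ⟨fun x hx => ⟨(h1 x hx).1, by have := (h1 x hx).2; omega⟩, h2, by omega, h4, h5⟩⟩
  left_inv p := rfl
  right_inv p := rfl

def T2 (N n : ℕ) (hn : n ≤ N) : Fib2 (N + 1) n ≃ Fib2 N n where
  toFun p := ⟨p.val, by
    obtain ⟨h1, h2, h3⟩ := p.prop
    exact ⟨h1, by have := card_le_sum _ h1; omega, h3⟩⟩
  invFun p := ⟨p.val, by
    obtain ⟨h1, h2, h3⟩ := p.prop
    exact ⟨h1, by omega, h3⟩⟩
  left_inv p := rfl
  right_inv p := rfl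

/-- Decomposition on the right side. -/
def D2 (N n : ℕ) (hn : N + 1 ≤ n) :
    Fib2 (N + 1) n ≃ Fib2 N n ⊕ Fib2 (N + 1) (n - (N + 1)) where
  toFun p :=
    if h : p.val.card ≤ N then
      Sum.inl ⟨p.val, p.prop.1, h, p.prop.2.2⟩
    else
      Sum.inr ⟨shrink p.val, shrink_pos _, by
          have := shrink_card_le p.val; have := p.prop.2.1; omega, by
          have hcard : p.val.card = N + 1 := by have := p.prop.2.1; omega
          have := shrink_sum p.val p.prop.1
          have := p.prop.2.2
          omega⟩
  invFun q :=
    match q with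
    | Sum.inl p => ⟨p.val, p.prop.1, by have := p.prop.2.1; omega, p.prop.2.2⟩
    | Sum.inr p => ⟨grow (N + 1) p.val, grow_pos _ _, by
        rw [grow_card _ _ p.prop.2.1], by
        rw [grow_sum _ _ p.prop.2.1, p.prop.2.2]; omega⟩
  left_inv p := by
    by_cases h : p.val.card ≤ N
    · simp only [dif_pos h]
      exact Subtype.ext rfl
    · simp only [dif_neg h]
      apply Subtype.ext
      exact grow_shrink _ _ (by have := p.prop.2.1; omega) p.prop.1
  right_inv q := by
    match q with
    | Sum.inl p =>
      simp only []
      rw [dif_pos p.prop.2.1]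
      exact congrArg _ (Subtype.ext rfl)
    | Sum.inr p =>
      simp only []
      have hc : (grow (N + 1) p.val).card = N + 1 := grow_card _ _ p.prop.2.1
      rw [dif_neg (by omega)]
      congr 1
      apply Subtype.ext
      exact shrink_grow _ _ p.prop.1


/-- Forward map for the left decomposition. -/
def d1f (M N n : ℕ) (hn : N + 1 ≤ n) :
    Fib1 M (N + 1) n → Fib1 M N n ⊕ Fib1 M (N + 1) (n - (N + 1)) :=
  fun ⟨(b, c), hp⟩ =>
    if h1 : c.card = N + 1 then
      Sum.inr ⟨(b, shrink c), by
        dsimp only at hp ⊢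
        obtain ⟨hb, hc1, hc2, hc3, hc4⟩ := hp
        refine ⟨hb, shrink_pos _, by have := shrink_card_le c; omega,
          fun x hx => le_of_lt (shrink_lt M _ hc3 x hx), ?_⟩
        have := shrink_sum c hc1
        omega⟩
    else if h2 : (M + N + 1) ∈ b then
      Sum.inr ⟨(b.erase (M + N + 1), if M = 0 then c else M ::ₘ c), by
        dsimp only at hp ⊢
        obtain ⟨hb, hc1, hc2, hc3, hc4⟩ := hp
        have hsum : b.sum = (b.erase (M + N + 1)).sum + (M + N + 1) := by
          conv_lhs => rw [← Multiset.cons_erase h2]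
          rw [Multiset.sum_cons]; omega
        refine ⟨fun x hx => hb x (Multiset.mem_of_mem_erase hx), ?_, ?_, ?_, ?_⟩
        · by_cases hM : M = 0
          · simp only [if_pos hM]; exact hc1
          · simp only [if_neg hM]
            intro x hx
            rcases Multiset.mem_cons.mp hx with rfl | hx
            · omega
            · exact hc1 x hx
        · by_cases hM : M = 0
          · simp only [if_pos hM]; omega
          · simp only [if_neg hM, Multiset.card_cons]; omega
        · by_cases hM : M = 0
          · simp only [if_pos hM]; exact hc3
          · simp only [if_neg hM]
            intro x hx
            rcases Multiset.mem_cons.mp hx with rfl | hx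
            · exact le_refl _
            · exact hc3 x hx
        · by_cases hM : M = 0
          · simp only [if_pos hM]; omega
          · simp only [if_neg hM, Multiset.sum_cons]; omega⟩
    else
      Sum.inl ⟨(b, c), by
        dsimp only at hp ⊢
        obtain ⟨hb, hc1, hc2, hc3, hc4⟩ := hp
        refine ⟨fun x hx => ⟨(hb x hx).1, ?_⟩, hc1, by omega, hc3, hc4⟩
        have h3 := (hb x hx).2
        have : x ≠ M + N + 1 := fun he => h2 (he ▸ hx)
        omega⟩

/-- Backward map for the left decomposition. -/
def d1b (M N n : ℕ) (hn : N + 1 ≤ n) :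
    Fib1 M N n ⊕ Fib1 M (N + 1) (n - (N + 1)) → Fib1 M (N + 1) n :=
  fun q =>
    match q with
    | Sum.inl ⟨(b, c), hp⟩ => ⟨(b, c), by
        dsimp only at hp ⊢
        obtain ⟨hb, hc1, hc2, hc3, hc4⟩ := hp
        exact ⟨fun x hx => ⟨(hb x hx).1, by have := (hb x hx).2; omega⟩, hc1, by omega, hc3, hc4⟩⟩
    | Sum.inr ⟨(b, c), hp⟩ =>
      if hm : M ∈ c then
        ⟨((M + N + 1) ::ₘ b, c.erase M), by
          dsimp only at hp ⊢
          obtain ⟨hb, hc1, hc2, hc3, hc4⟩ := hp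
          have hsum : c.sum = (c.erase M).sum + M := by
            conv_lhs => rw [← Multiset.cons_erase hm]
            rw [Multiset.sum_cons]; omega
          refine ⟨?_, fun x hx => hc1 x (Multiset.mem_of_mem_erase hx),
            by have h := Multiset.card_erase_of_mem hm;
               rw [Nat.pred_eq_sub_one] at h; omega,
            fun x hx => hc3 x (Multiset.mem_of_mem_erase hx), ?_⟩
          · intro x hx
            rcases Multiset.mem_cons.mp hx with rfl | hx
            · omega
            · exact hb x hx
          · rw [Multiset.sum_cons]; omega⟩
      else if hM : M = 0 then
        ⟨((M + N + 1) ::ₘ b, c), by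
          dsimp only at hp ⊢
          obtain ⟨hb, hc1, hc2, hc3, hc4⟩ := hp
          refine ⟨?_, hc1, by omega, hc3, ?_⟩
          · intro x hx
            rcases Multiset.mem_cons.mp hx with rfl | hx
            · omega
            · exact hb x hx
          · rw [Multiset.sum_cons]; omega⟩
      else
        ⟨(b, grow (N + 1) c), by
          dsimp only at hp ⊢
          obtain ⟨hb, hc1, hc2, hc3, hc4⟩ := hp
          have hlt : ∀ x ∈ c, x < M := by
            intro x hx
            have := hc3 x hx
            have : x ≠ M := fun he => hm (he ▸ hx)
            omega
          refine ⟨hb, grow_pos _ _, by rw [grow_card _ _ hc2],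
            grow_le _ _ (by omega) _ hlt, ?_⟩
          rw [grow_sum _ _ hc2]; omega⟩

/-- Decomposition on the left side. -/
def D1 (M N n : ℕ) (hn : N + 1 ≤ n) :
    Fib1 M (N + 1) n ≃ Fib1 M N n ⊕ Fib1 M (N + 1) (n - (N + 1)) where
  toFun := d1f M N n hn
  invFun := d1b M N n hn
  left_inv := by
    rintro ⟨⟨b, c⟩, hp⟩
    obtain ⟨hb, hc1, hc2, hc3, hc4⟩ := hp
    dsimp only at hb hc1 hc2 hc3 hc4
    by_cases h1 : c.card = N + 1
    · have hM : 0 < M := by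
        have hne : c ≠ 0 := by
          intro he
          rw [he] at h1; simp at h1
        obtain ⟨x, hx⟩ := Multiset.exists_mem_of_ne_zero hne
        have := hc1 x hx; have := hc3 x hx; omega
      have hnm : ¬ (M ∈ shrink c) := fun h => by
        have := shrink_lt M _ hc3 M h; omega
      rw [d1f]
      simp only [dif_pos h1]
      rw [d1b]
      simp only [Fib1, dif_neg hnm, dif_neg (by omega : ¬ M = 0)]
      exact Subtype.ext (Prod.ext rfl (grow_shrink _ _ h1 hc1))
    · by_cases h2 : (M + N + 1) ∈ b
      · rw [d1f]
        simp only [dif_neg h1, dif_pos h2]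
        by_cases hM : M = 0
        · have hc0 : c = 0 := by
            rw [Multiset.eq_zero_iff_forall_notMem]
            intro x hx
            have := hc1 x hx; have := hc3 x hx; omega
          have hnm : ¬ (M ∈ c) := by rw [hc0]; simp
          simp only [if_pos hM]
          rw [d1b]
          simp only [Fib1, dif_neg hnm, dif_pos hM]
          exact Subtype.ext (Prod.ext (Multiset.cons_erase h2) rfl)
        · simp only [if_neg hM]
          have hmem : M ∈ (M ::ₘ c) := Multiset.mem_cons_self _ _
          rw [d1b]
          simp only [Fib1, dif_pos hmem]
          exact Subtype.ext (Prod.ext (Multiset.cons_erase h2)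
            (Multiset.erase_cons_head _ _))
      · rw [d1f]
        simp only [dif_neg h1, dif_neg h2]
        rw [d1b]
  right_inv := by
    rintro (⟨⟨b, c⟩, hp⟩ | ⟨⟨b, c⟩, hp⟩)
    · obtain ⟨hb, hc1, hc2, hc3, hc4⟩ := hp
      dsimp only at hb hc1 hc2 hc3 hc4
      have h1 : ¬ (c.card = N + 1) := by omega
      have h2 : ¬ ((M + N + 1) ∈ b) := fun h => by
        have := (hb _ h).2; omega
      rw [d1b, d1f]
      simp only [dif_neg h1, dif_neg h2]
    · obtain ⟨hb, hc1, hc2, hc3, hc4⟩ := hp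
      dsimp only at hb hc1 hc2 hc3 hc4
      by_cases hm : M ∈ c
      · have hM : 0 < M := hc1 M hm
        have hne : c ≠ 0 := by
          intro he; rw [he] at hm; simp at hm
        have h1 : ¬ ((c.erase M).card = N + 1) := by
          have h := Multiset.card_erase_of_mem hm
          rw [Nat.pred_eq_sub_one] at h
          have := Multiset.card_pos.mpr hne
          omega
        have h2 : (M + N + 1) ∈ ((M + N + 1) ::ₘ b) := Multiset.mem_cons_self _ _
        rw [d1b]
        simp only [Fib1, dif_pos hm]
        rw [d1f]
        simp only [dif_neg h1, dif_pos h2]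
        apply congrArg Sum.inr
        apply Subtype.ext
        refine Prod.ext (Multiset.erase_cons_head _ _) ?_
        simp only [if_neg (by omega : ¬ M = 0)]
        exact Multiset.cons_erase hm
      · by_cases hM : M = 0
        · have hc0 : c = 0 := by
            rw [Multiset.eq_zero_iff_forall_notMem]
            intro x hx
            have := hc1 x hx; have := hc3 x hx; omega
          have h1 : ¬ (c.card = N + 1) := by rw [hc0]; simp
          have h2 : (M + N + 1) ∈ ((M + N + 1) ::ₘ b) := Multiset.mem_cons_self _ _
          rw [d1b]
          simp only [Fib1, dif_neg hm, dif_pos hM]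
          rw [d1f]
          simp only [dif_neg h1, dif_pos h2]
          apply congrArg Sum.inr
          apply Subtype.ext
          refine Prod.ext (Multiset.erase_cons_head _ _) ?_
          simp only [if_pos hM]
        · have h1 : (grow (N + 1) c).card = N + 1 := grow_card _ _ hc2
          rw [d1b]
          simp only [Fib1, dif_neg hm, dif_neg hM]
          rw [d1f]
          simp only [dif_pos h1]
          apply congrArg Sum.inr
          apply Subtype.ext
          exact Prod.ext rfl (shrink_grow _ _ hc1)


/-- Base case: N = 0. -/
def E0 (M n : ℕ) : Fib1 M 0 n ≃ Fib2 0 n where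
  toFun p := ⟨0, by simp, by simp, by
    obtain ⟨⟨b, c⟩, hp⟩ := p
    obtain ⟨hb, hc1, hc2, hc3, hc4⟩ := hp
    dsimp only at hb hc2 hc4
    have hb0 : b = 0 := Multiset.eq_zero_iff_forall_notMem.mpr
      (fun x hx => by have := hb x hx; omega)
    have hc0 : c = 0 := Multiset.card_eq_zero.mp (by omega)
    rw [hb0, hc0] at hc4
    simpa using hc4⟩
  invFun q := ⟨(0, 0), by
    refine ⟨by simp, by simp, by simp, by simp, ?_⟩
    obtain ⟨s, h1, h2, h3⟩ := q
    have hs0 : s = 0 := Multiset.card_eq_zero.mp (by omega)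
    rw [hs0] at h3
    simpa using h3⟩
  left_inv p := by
    obtain ⟨⟨b, c⟩, hp⟩ := p
    obtain ⟨hb, hc1, hc2, hc3, hc4⟩ := hp
    dsimp only at hb hc2 hc4
    have hb0 : b = 0 := Multiset.eq_zero_iff_forall_notMem.mpr
      (fun x hx => by have := hb x hx; omega)
    have hc0 : c = 0 := Multiset.card_eq_zero.mp (by omega)
    exact Subtype.ext (Prod.ext hb0.symm hc0.symm)
  right_inv q := by
    obtain ⟨s, h1, h2, h3⟩ := q
    have hs0 : s = 0 := Multiset.card_eq_zero.mp (by omega)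
    exact Subtype.ext hs0.symm

/-- The recursively-defined weight-preserving bijection on fibers. -/
def E (M : ℕ) : (N : ℕ) → (n : ℕ) → Fib1 M N n ≃ Fib2 N n
  | 0, n => E0 M n
  | (N + 1), n =>
    if h : N + 1 ≤ n then
      (D1 M N n h).trans
        (((E M N n).sumCongr (E M (N + 1) (n - (N + 1)))).trans (D2 N n h).symm)
    else
      (T1 M N n (by omega)).trans ((E M N n).trans (T2 N n (by omega)).symm)
  termination_by N n => (N, n)


def Core1 (M N : ℕ) :=
  {p : Multiset ℕ × Multiset ℕ //
    (∀ x ∈ p.1, M < x ∧ x ≤ M + N) ∧ (∀ x ∈ p.2, 0 < x) ∧ p.2.card ≤ N ∧ (∀ x ∈ p.2, x ≤ M)}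

def Core2 (N : ℕ) := {s : Multiset ℕ // (∀ x ∈ s, 0 < x) ∧ s.card ≤ N}

lemma E_val_eq (M N : ℕ) {n m : ℕ} (h : m = n) (p : Fib1 M N m) (p' : Fib1 M N n)
    (hp : p.val = p'.val) : (E M N m p).val = (E M N n p').val := by
  subst h
  cases Subtype.ext hp
  rfl

lemma E_symm_val_eq (M N : ℕ) {n m : ℕ} (h : m = n) (q : Fib2 N m) (q' : Fib2 N n)
    (hq : q.val = q'.val) : ((E M N m).symm q).val = ((E M N n).symm q').val := by
  subst h
  cases Subtype.ext hq
  rfl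

/-- The core weight-preserving bijection. -/
def coreEquiv (M N : ℕ) : Core1 M N ≃ Core2 N where
  toFun p :=
    ⟨(E M N (p.val.1.sum + p.val.2.sum)
        ⟨p.val, p.prop.1, p.prop.2.1, p.prop.2.2.1, p.prop.2.2.2, rfl⟩).val,
      (E M N _ _).prop.1, (E M N _ _).prop.2.1⟩
  invFun q :=
    ⟨((E M N q.val.sum).symm ⟨q.val, q.prop.1, q.prop.2, rfl⟩).val,
      ((E M N q.val.sum).symm _).prop.1, ((E M N q.val.sum).symm _).prop.2.1,
      ((E M N q.val.sum).symm _).prop.2.2.1, ((E M N q.val.sum).symm _).prop.2.2.2.1⟩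
  left_inv p := by
    obtain ⟨v, hv⟩ := p
    dsimp only
    set x := E M N (v.1.sum + v.2.sum) ⟨v, hv.1, hv.2.1, hv.2.2.1, hv.2.2.2, rfl⟩ with hx
    have hs : x.val.sum = v.1.sum + v.2.sum := x.prop.2.2
    apply Subtype.ext
    have h1 : ((E M N x.val.sum).symm ⟨x.val, x.prop.1, x.prop.2.1, rfl⟩).val
        = ((E M N (v.1.sum + v.2.sum)).symm ⟨x.val, x.prop.1, x.prop.2.1, hs⟩).val :=
      E_symm_val_eq M N hs _ _ rfl
    rw [h1]
    have h2 : (⟨x.val, x.prop.1, x.prop.2.1, hs⟩ : Fib2 N (v.1.sum + v.2.sum)) = x := Subtype.ext rfl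
    rw [h2, hx]
    exact congrArg Subtype.val (Equiv.symm_apply_apply _ _)
  right_inv q := by
    obtain ⟨s, hq⟩ := q
    dsimp only
    have hs := ((E M N s.sum).symm ⟨s, hq.1, hq.2, rfl⟩).prop.2.2.2.2
    apply Subtype.ext
    exact (E_val_eq M N hs _ _ rfl).trans (congrArg Subtype.val (Equiv.apply_symm_apply _ _))

lemma coreEquiv_sum (M N : ℕ) (p : Core1 M N) :
    (coreEquiv M N p).val.sum = p.val.1.sum + p.val.2.sum :=
  (E M N (p.val.1.sum + p.val.2.sum)
    ⟨p.val, p.prop.1, p.prop.2.1, p.prop.2.2.1, p.prop.2.2.2, rfl⟩).prop.2.2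


section PartnLayer

/-- Build a partition from a multiset of positive integers by sorting. -/
def toPartn (s : Multiset ℕ) (hs : ∀ x ∈ s, 0 < x) : Partn :=
  ⟨Multiset.sort s (· ≥ ·), Multiset.pairwise_sort _ _,
    fun x hx => hs x (by rwa [Multiset.mem_sort] at hx)⟩

lemma toPartn_parts (s : Multiset ℕ) (hs : ∀ x ∈ s, 0 < x) :
    ((toPartn s hs).parts : Multiset ℕ) = s := Multiset.sort_eq _ _

lemma mem_toPartn {s : Multiset ℕ} {hs : ∀ x ∈ s, 0 < x} {x : ℕ} :
    x ∈ (toPartn s hs).parts ↔ x ∈ s := by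
  rw [← Multiset.mem_coe, toPartn_parts]

lemma partn_ext {p q : Partn} (h : p.parts = q.parts) : p = q := by
  cases p; cases q; cases h; rfl

lemma partn_ext' {p q : Partn} (h : (p.parts : Multiset ℕ) = (q.parts : Multiset ℕ)) :
    p = q :=
  partn_ext (List.Perm.eq_of_pairwise' p.sorted q.sorted (Multiset.coe_eq_coe.mp h))

lemma toPartn_coe (p : Partn) (h : ∀ x ∈ (p.parts : Multiset ℕ), 0 < x) :
    toPartn (↑p.parts) h = p :=
  partn_ext' (toPartn_parts _ _)

lemma toPartn_wt (s : Multiset ℕ) (hs : ∀ x ∈ s, 0 < x) : (toPartn s hs).wt = s.sum := by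
  have := congrArg Multiset.sum (toPartn_parts s hs)
  simpa [Partn.wt] using this

lemma toPartn_len (s : Multiset ℕ) (hs : ∀ x ∈ s, 0 < x) : (toPartn s hs).len = s.card := by
  have := congrArg Multiset.card (toPartn_parts s hs)
  simpa [Partn.len] using this

def Dom (M N : ℕ) := {p : Partn × Partn // (∀ x ∈ p.1.parts, x ≤ M + N) ∧
              p.2.len ≤ N ∧ (∀ x ∈ p.2.parts, x ≤ M)}

def Cod (M N : ℕ) := {q : Partn × Partn // q.1.len ≤ N ∧ (∀ x ∈ q.2.parts, x ≤ M)}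

def fwdCore (M N : ℕ) (p : Dom M N) : Core1 M N :=
  ⟨((p.val.1.parts : Multiset ℕ).filter (fun x => ¬ x ≤ M), (p.val.2.parts : Multiset ℕ)), by
    dsimp only
    refine ⟨fun x hx => ?_, fun x hx => p.val.2.pos x (Multiset.mem_coe.mp hx), ?_,
      fun x hx => p.prop.2.2 x (Multiset.mem_coe.mp hx)⟩
    · obtain ⟨hx1, hx2⟩ := Multiset.mem_filter.mp hx
      exact ⟨Nat.not_le.mp hx2, p.prop.1 x (Multiset.mem_coe.mp hx1)⟩
    · rw [Multiset.coe_card]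
      exact p.prop.2.1⟩

def Fwd (M N : ℕ) (p : Dom M N) : Cod M N :=
  ⟨(toPartn (coreEquiv M N (fwdCore M N p)).val (coreEquiv M N (fwdCore M N p)).prop.1,
    toPartn ((p.val.1.parts : Multiset ℕ).filter (fun x => x ≤ M))
      (fun x hx => p.val.1.pos x (Multiset.mem_coe.mp (Multiset.mem_of_mem_filter hx)))), by
    refine ⟨?_, ?_⟩ <;> dsimp only
    · rw [toPartn_len]
      exact (coreEquiv M N (fwdCore M N p)).prop.2
    · intro x hx
      exact (Multiset.mem_filter.mp (mem_toPartn.mp hx)).2⟩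

def bwdCore2 (M N : ℕ) (q : Cod M N) : Core2 N :=
  ⟨(q.val.1.parts : Multiset ℕ), fun x hx => q.val.1.pos x (Multiset.mem_coe.mp hx), by
    rw [Multiset.coe_card]; exact q.prop.1⟩

def Bwd (M N : ℕ) (q : Cod M N) : Dom M N :=
  ⟨(toPartn ((q.val.2.parts : Multiset ℕ) + ((coreEquiv M N).symm (bwdCore2 M N q)).val.1)
      (by
        intro x hx
        rcases Multiset.mem_add.mp hx with h | h
        · exact q.val.2.pos x (Multiset.mem_coe.mp h)
        · have := (((coreEquiv M N).symm (bwdCore2 M N q)).prop.1 x h).1; omega),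
    toPartn ((coreEquiv M N).symm (bwdCore2 M N q)).val.2
      ((coreEquiv M N).symm (bwdCore2 M N q)).prop.2.1), by
    refine ⟨?_, ?_, ?_⟩ <;> dsimp only
    · intro x hx
      rcases Multiset.mem_add.mp (mem_toPartn.mp hx) with h | h
      · have := q.prop.2 x (Multiset.mem_coe.mp h); omega
      · exact (((coreEquiv M N).symm (bwdCore2 M N q)).prop.1 x h).2
    · rw [toPartn_len]
      exact ((coreEquiv M N).symm (bwdCore2 M N q)).prop.2.2.1
    · intro x hx
      exact ((coreEquiv M N).symm (bwdCore2 M N q)).prop.2.2.2 x (mem_toPartn.mp hx)⟩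

lemma wt_coe (p : Partn) : (p.parts : Multiset ℕ).sum = p.wt := by simp [Partn.wt]

lemma Fwd_parts1 (M N : ℕ) (p : Dom M N) :
    ((Fwd M N p).val.1.parts : Multiset ℕ) = (coreEquiv M N (fwdCore M N p)).val :=
  toPartn_parts (coreEquiv M N (fwdCore M N p)).val (coreEquiv M N (fwdCore M N p)).prop.1

lemma Fwd_parts2 (M N : ℕ) (p : Dom M N) :
    ((Fwd M N p).val.2.parts : Multiset ℕ)
      = (p.val.1.parts : Multiset ℕ).filter (fun x => x ≤ M) :=
  toPartn_parts ((p.val.1.parts : Multiset ℕ).filter (fun x => x ≤ M))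
    (fun x hx => p.val.1.pos x (Multiset.mem_coe.mp (Multiset.mem_of_mem_filter hx)))

lemma Bwd_parts1 (M N : ℕ) (q : Cod M N) :
    ((Bwd M N q).val.1.parts : Multiset ℕ)
      = (q.val.2.parts : Multiset ℕ) + ((coreEquiv M N).symm (bwdCore2 M N q)).val.1 :=
  toPartn_parts ((q.val.2.parts : Multiset ℕ) + ((coreEquiv M N).symm (bwdCore2 M N q)).val.1)
    (by
      intro x hx
      rcases Multiset.mem_add.mp hx with h | h
      · exact q.val.2.pos x (Multiset.mem_coe.mp h)
      · have := (((coreEquiv M N).symm (bwdCore2 M N q)).prop.1 x h).1; omega)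

lemma Bwd_parts2 (M N : ℕ) (q : Cod M N) :
    ((Bwd M N q).val.2.parts : Multiset ℕ)
      = ((coreEquiv M N).symm (bwdCore2 M N q)).val.2 :=
  toPartn_parts ((coreEquiv M N).symm (bwdCore2 M N q)).val.2
    ((coreEquiv M N).symm (bwdCore2 M N q)).prop.2.1

lemma bwd_fwd (M N : ℕ) : Function.LeftInverse (Bwd M N) (Fwd M N) := by
  intro p
  have hX : bwdCore2 M N (Fwd M N p) = coreEquiv M N (fwdCore M N p) :=
    Subtype.ext (Fwd_parts1 M N p)
  have hy : ((coreEquiv M N).symm (bwdCore2 M N (Fwd M N p))).val = (fwdCore M N p).val := by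
    rw [hX, Equiv.symm_apply_apply]
  have e1 : ((Fwd M N p).val.2.parts : Multiset ℕ)
      = (p.val.1.parts : Multiset ℕ).filter (fun x => x ≤ M) := Fwd_parts2 M N p
  have e2 : ((coreEquiv M N).symm (bwdCore2 M N (Fwd M N p))).val.1
      = (p.val.1.parts : Multiset ℕ).filter (fun x => ¬ x ≤ M) := congrArg Prod.fst hy
  apply Subtype.ext
  refine Prod.ext (partn_ext' ?_) (partn_ext' ?_)
  · calc ((Bwd M N (Fwd M N p)).val.1.parts : Multiset ℕ)
        = ((Fwd M N p).val.2.parts : Multiset ℕ)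
            + ((coreEquiv M N).symm (bwdCore2 M N (Fwd M N p))).val.1 :=
          Bwd_parts1 M N (Fwd M N p)
      _ = (p.val.1.parts : Multiset ℕ).filter (fun x => x ≤ M)
            + (p.val.1.parts : Multiset ℕ).filter (fun x => ¬ x ≤ M) := by rw [e1, e2]
      _ = (p.val.1.parts : Multiset ℕ) := Multiset.filter_add_not _ _
  · calc ((Bwd M N (Fwd M N p)).val.2.parts : Multiset ℕ)
        = ((coreEquiv M N).symm (bwdCore2 M N (Fwd M N p))).val.2 :=
          Bwd_parts2 M N (Fwd M N p)
      _ = (p.val.2.parts : Multiset ℕ) := congrArg Prod.snd hy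

lemma fwd_bwd (M N : ℕ) : Function.RightInverse (Bwd M N) (Fwd M N) := by
  intro q
  have e0 : ((Bwd M N q).val.1.parts : Multiset ℕ)
      = (q.val.2.parts : Multiset ℕ) + ((coreEquiv M N).symm (bwdCore2 M N q)).val.1 :=
    Bwd_parts1 M N q
  have hfilter1 : ((Bwd M N q).val.1.parts : Multiset ℕ).filter (fun x => ¬ x ≤ M)
      = ((coreEquiv M N).symm (bwdCore2 M N q)).val.1 := by
    rw [e0, Multiset.filter_add]
    rw [Multiset.filter_eq_nil.mpr (fun x hx => by
      have := q.prop.2 x (Multiset.mem_coe.mp hx); simp; omega)]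
    rw [Multiset.filter_eq_self.mpr (fun x hx => by
      have := (((coreEquiv M N).symm (bwdCore2 M N q)).prop.1 x hx).1; omega)]
    rw [zero_add]
  have hfilter2 : ((Bwd M N q).val.1.parts : Multiset ℕ).filter (fun x => x ≤ M)
      = (q.val.2.parts : Multiset ℕ) := by
    rw [e0, Multiset.filter_add]
    rw [Multiset.filter_eq_self.mpr (fun x hx => q.prop.2 x (Multiset.mem_coe.mp hx))]
    rw [Multiset.filter_eq_nil.mpr (fun x hx => by
      have := (((coreEquiv M N).symm (bwdCore2 M N q)).prop.1 x hx).1; simp; omega)]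
    rw [add_zero]
  have hcore : fwdCore M N (Bwd M N q) = (coreEquiv M N).symm (bwdCore2 M N q) :=
    Subtype.ext (Prod.ext hfilter1 (Bwd_parts2 M N q))
  have hq2 : coreEquiv M N (fwdCore M N (Bwd M N q)) = bwdCore2 M N q := by
    rw [hcore, Equiv.apply_symm_apply]
  apply Subtype.ext
  refine Prod.ext (partn_ext' ?_) (partn_ext' ?_)
  · calc ((Fwd M N (Bwd M N q)).val.1.parts : Multiset ℕ)
        = (coreEquiv M N (fwdCore M N (Bwd M N q))).val := Fwd_parts1 M N (Bwd M N q)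
      _ = (bwdCore2 M N q).val := congrArg Subtype.val hq2
      _ = (q.val.1.parts : Multiset ℕ) := rfl
  · calc ((Fwd M N (Bwd M N q)).val.2.parts : Multiset ℕ)
        = ((Bwd M N q).val.1.parts : Multiset ℕ).filter (fun x => x ≤ M) :=
          Fwd_parts2 M N (Bwd M N q)
      _ = (q.val.2.parts : Multiset ℕ) := hfilter2

lemma fwd_wt (M N : ℕ) (p : Dom M N) :
    p.val.1.wt + p.val.2.wt = (Fwd M N p).val.1.wt + (Fwd M N p).val.2.wt := by
  have h1 : (Fwd M N p).val.1.wt = (coreEquiv M N (fwdCore M N p)).val.sum := by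
    rw [← wt_coe, Fwd_parts1]
  have h2 : (Fwd M N p).val.2.wt
      = ((p.val.1.parts : Multiset ℕ).filter (fun x => x ≤ M)).sum := by
    rw [← wt_coe, Fwd_parts2]
  have h3 := coreEquiv_sum M N (fwdCore M N p)
  have h4 : (fwdCore M N p).val.1.sum
      = ((p.val.1.parts : Multiset ℕ).filter (fun x => ¬ x ≤ M)).sum := rfl
  have h5 : (fwdCore M N p).val.2.sum = p.val.2.wt := by
    show ((p.val.2.parts : Multiset ℕ)).sum = _
    simp [Partn.wt]
  have h6 : ((p.val.1.parts : Multiset ℕ).filter (fun x => x ≤ M)).sum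
      + ((p.val.1.parts : Multiset ℕ).filter (fun x => ¬ x ≤ M)).sum = p.val.1.wt := by
    rw [← Multiset.sum_add, Multiset.filter_add_not]
    simp [Partn.wt]
  omega

lemma fwd_filter (M N : ℕ) (p : Dom M N) :
    ((p.val.1.parts.filter (fun x => decide (x ≤ M)) : Multiset ℕ))
      = ((Fwd M N p).val.2.parts : Multiset ℕ) := by
  rw [Fwd_parts2 M N p]
  exact (Multiset.filter_coe _ _).symm

end PartnLayer

end AlgZ


/-- Refinement of Algorithm Z: a weight-preserving bijection `F` from pairs `(α, γ)`
with parts of `α` at most `M + N` and `γ` having at most `N` parts each at most `M`,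
onto pairs `(ξ, δ)` with `ξ` having at most `N` parts and parts of `δ` at most `M`,
such that the multiset of parts of `α` not exceeding `M` coincides with the multiset
of parts of `δ`. -/
theorem algorithmZ_refinement (M N : ℕ) (hN : 0 < N) :
    ∃ F : {p : Partn × Partn // (∀ x ∈ p.1.parts, x ≤ M + N) ∧
              p.2.len ≤ N ∧ (∀ x ∈ p.2.parts, x ≤ M)} →
          {q : Partn × Partn // q.1.len ≤ N ∧ (∀ x ∈ q.2.parts, x ≤ M)},
      Function.Bijective F ∧
      ∀ p, p.val.1.wt + p.val.2.wt = (F p).val.1.wt + (F p).val.2.wt ∧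
        ((p.val.1.parts.filter (fun x => decide (x ≤ M)) : Multiset ℕ)) =
          ((F p).val.2.parts : Multiset ℕ) := by
  exact ⟨AlgZ.Fwd M N, Function.bijective_iff_has_inverse.mpr
      ⟨AlgZ.Bwd M N, AlgZ.bwd_fwd M N, AlgZ.fwd_bwd M N⟩,
    fun p => ⟨AlgZ.fwd_wt M N p, AlgZ.fwd_filter M N p⟩⟩
end

section
/- Let M and N be positive integers and n a nonnegative integer. Then the number of nonincreasing sequences of nonnegative integers δ = (δ_1, …, δ_N) with δ_1 + ⋯ + δ_N = n satisfying 0 ≤ δ_i − δ_{i+1} ≤ M + N − i for all 1 ≤ i ≤ N (with the convention δ_{N+1} = 0) equals the number of pairs of partitions (π, μ) with |π| + |μ| = n such that every part of π lies in the interval [M+1, M+N−1] with the part M+i appearing at most N−i times for each 1 ≤ i ≤ N−1, and μ has at most N parts each at most M. -/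
open PowerSeries Finset

section Aux



/-- bounded geometric series ∑_{k≤c} X^{dk} -/
noncomputable def geomB (d c : ℕ) : PowerSeries ℤ :=
  ∑ k ∈ Finset.range (c+1), (PowerSeries.X : PowerSeries ℤ)^(d*k)

lemma geomB_mul (d c : ℕ) : geomB d c * (1 - X^d) = 1 - X^(d*(c+1)) := by
  rw [geomB, Finset.sum_mul]
  have h : ∀ k ∈ Finset.range (c+1), (X:PowerSeries ℤ)^(d*k) * (1 - X^d)
      = X^(d*k) - X^(d*(k+1)) := by
    intro k _
    have : d*(k+1) = d*k + d := by ring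
    rw [this, pow_add]; ring
  rw [Finset.sum_congr rfl h, Finset.sum_range_sub' (fun k => (X:PowerSeries ℤ)^(d*k))]
  simp

lemma coeff_geomB (d c : ℕ) (hd : 0 < d) (m : ℕ) :
    PowerSeries.coeff m (geomB d c) = if ∃ k ≤ c, d * k = m then 1 else 0 := by
  rw [geomB, map_sum]
  simp only [PowerSeries.coeff_X_pow]
  by_cases h : ∃ k ≤ c, d * k = m
  · obtain ⟨k0, hk0, hm⟩ := h
    rw [if_pos ⟨k0, hk0, hm⟩]
    rw [Finset.sum_eq_single k0]
    · simp [hm]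
    · intro k hk hne
      rw [if_neg]
      intro hmk
      exact hne (Nat.eq_of_mul_eq_mul_left hd (hmk.symm.trans hm.symm))
    · intro hk; exact absurd (Finset.mem_range.2 (by omega)) hk
  · rw [if_neg h]
    apply Finset.sum_eq_zero
    intro k hk
    rw [if_neg]
    intro hmk
    have := Finset.mem_range.1 hk
    exact h ⟨k, by omega, hmk.symm⟩
/-- number of tuples g with g i ≤ c i and ∑ d i * g i = n -/
def cnt {N : ℕ} (d c : Fin N → ℕ) (n : ℕ) : ℕ :=
  ((Fintype.piFinset (fun i => Finset.Iic (c i))).filter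
    (fun g : Fin N → ℕ => ∑ i, d i * g i = n)).card

lemma count_coeff {N : ℕ} (d c : Fin N → ℕ) (hd : ∀ i, 0 < d i) (n : ℕ) :
    PowerSeries.coeff n (∏ i, geomB (d i) (c i)) = cnt d c n := by
  rw [PowerSeries.coeff_prod]
  have h1 : ∀ l ∈ Finset.finsuppAntidiag (Finset.univ : Finset (Fin N)) n,
      (∏ i, PowerSeries.coeff (l i) (geomB (d i) (c i)))
      = if (∀ i, ∃ k ≤ c i, d i * k = l i) then 1 else 0 := by
    intro l _
    rw [Finset.prod_congr rfl (fun i _ => coeff_geomB (d i) (c i) (hd i) (l i)),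
      Finset.prod_boole]
    simp
  rw [Finset.sum_congr rfl h1, Finset.sum_boole]
  norm_cast
  unfold cnt
  apply Finset.card_bij' (fun l _ => fun i => l i / d i)
    (fun g _ => Finsupp.equivFunOnFinite.symm (fun i => d i * g i))
  · intro l hl
    simp only [Finset.mem_filter, Finset.mem_finsuppAntidiag] at hl
    obtain ⟨⟨hsum, -⟩, hex⟩ := hl
    simp only [Finset.mem_filter, Fintype.mem_piFinset, Finset.mem_Iic]
    constructor
    · intro i
      obtain ⟨k, hk, hdk⟩ := hex i
      rw [← hdk, Nat.mul_div_cancel_left _ (hd i)]; exact hk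
    · rw [← hsum]
      apply Finset.sum_congr rfl
      intro i _
      obtain ⟨k, hk, hdk⟩ := hex i
      rw [← hdk, Nat.mul_div_cancel_left _ (hd i)]
  · intro g hg
    simp only [Finset.mem_filter, Fintype.mem_piFinset, Finset.mem_Iic] at hg
    simp only [Finset.mem_filter, Finset.mem_finsuppAntidiag]
    refine ⟨⟨?_, by simp⟩, ?_⟩
    · rw [← hg.2]
      apply Finset.sum_congr rfl
      intro i _
      simp
    · intro i
      exact ⟨g i, hg.1 i, by simp⟩
  · intro l hl
    simp only [Finset.mem_filter, Finset.mem_finsuppAntidiag] at hl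
    obtain ⟨-, hex⟩ := hl
    ext i
    obtain ⟨k, hk, hdk⟩ := hex i
    simp [← hdk, Nat.mul_div_cancel_left _ (hd i)]
  · intro g hg
    funext i
    simp [Nat.mul_div_cancel_left _ (hd i)]

/-- number of h : Fin N → ℕ with ∑ h ≤ M and ∑ (i+1) h i = m -/
def boxCount (N M m : ℕ) : ℕ :=
  ((Fintype.piFinset (fun _ : Fin N => Finset.Iic M)).filter
    (fun h : Fin N → ℕ => (∑ i, h i) ≤ M ∧ ∑ i, (i.1+1) * h i = m)).card


noncomputable def Box (N M : ℕ) : PowerSeries ℤ :=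
  PowerSeries.mk (fun m => (boxCount N M m : ℤ))

lemma boxCount_zero_left (M m : ℕ) : boxCount 0 M m = if m = 0 then 1 else 0 := by
  unfold boxCount
  rcases eq_or_ne m 0 with rfl | hm
  · rw [if_pos rfl]
    apply Finset.card_eq_one.2
    refine ⟨fun i => i.elim0, ?_⟩
    ext g
    simp only [Finset.mem_filter, Fintype.mem_piFinset, Finset.mem_singleton]
    constructor
    · intro _; funext i; exact i.elim0
    · rintro rfl; simp
  · rw [if_neg hm]
    apply Finset.card_eq_zero.2
    apply Finset.filter_false_of_mem
    intro g _ hc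
    exact hm (by simpa using hc.2.symm)
lemma boxCount_zero_right (N m : ℕ) : boxCount N 0 m = if m = 0 then 1 else 0 := by
  unfold boxCount
  rcases eq_or_ne m 0 with rfl | hm
  · rw [if_pos rfl]
    apply Finset.card_eq_one.2
    refine ⟨fun _ => 0, ?_⟩
    ext g
    simp only [Finset.mem_filter, Fintype.mem_piFinset, Finset.mem_Iic, Finset.mem_singleton]
    constructor
    · rintro ⟨h1, -, -⟩
      funext i
      exact Nat.le_zero.1 (h1 i)
    · rintro rfl; simp
  · rw [if_neg hm]
    apply Finset.card_eq_zero.2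
    apply Finset.filter_false_of_mem
    intro g hg
    simp only [Fintype.mem_piFinset, Finset.mem_Iic] at hg
    intro hc
    apply hm
    rw [← hc.2]
    have : ∀ i : Fin N, g i = 0 := fun i => Nat.le_zero.1 (hg i)
    simp [this]

lemma boxCount_rec (N M m : ℕ) :
    boxCount (N+1) (M+1) m = boxCount (N+1) M m
      + (if M+1 ≤ m then boxCount N (M+1) (m - (M+1)) else 0) := by
  classical
  unfold boxCount
  -- split the filter
  set P1 : (Fin (N+1) → ℕ) → Prop := fun h => (∑ i, h i) ≤ M ∧ ∑ i, (i.1+1) * h i = m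
  set P2 : (Fin (N+1) → ℕ) → Prop := fun h => (∑ i, h i) = M+1 ∧ ∑ i, (i.1+1) * h i = m
  have hsplit : ((Fintype.piFinset (fun _ : Fin (N+1) => Finset.Iic (M+1))).filter
      (fun h : Fin (N+1) → ℕ => (∑ i, h i) ≤ M+1 ∧ ∑ i, (i.1+1) * h i = m))
      = ((Fintype.piFinset (fun _ : Fin (N+1) => Finset.Iic (M+1))).filter P1)
        ∪ ((Fintype.piFinset (fun _ : Fin (N+1) => Finset.Iic (M+1))).filter P2) := by
    rw [← Finset.filter_or]
    apply Finset.filter_congr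
    intro h _
    simp only [P1, P2]
    constructor
    · rintro ⟨h1, h2⟩; rcases Nat.lt_or_ge (∑ i, h i) (M+1) with hl | hl
      · exact Or.inl ⟨by omega, h2⟩
      · exact Or.inr ⟨by omega, h2⟩
    · rintro (⟨h1, h2⟩ | ⟨h1, h2⟩) <;> exact ⟨by omega, h2⟩
  rw [hsplit, Finset.card_union_of_disjoint]
  · congr 1
    · -- first piece equals boxCount (N+1) M m : change ambient
      apply Finset.card_bij' (fun h _ => h) (fun h _ => h)
      · intro a ha
        simp only [Finset.mem_filter, Fintype.mem_piFinset, Finset.mem_Iic, P1] at ha ⊢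
        refine ⟨fun i => ?_, ha.2⟩
        calc a i ≤ ∑ j, a j := Finset.single_le_sum (fun j _ => Nat.zero_le _) (Finset.mem_univ i)
        _ ≤ M := ha.2.1
      · intro a ha
        simp only [Finset.mem_filter, Fintype.mem_piFinset, Finset.mem_Iic, P1] at ha ⊢
        exact ⟨fun i => le_trans (ha.1 i) (Nat.le_succ M), ha.2⟩
      · intros; rfl
      · intros; rfl
    · -- second piece
      by_cases hm : M+1 ≤ m
      · rw [if_pos hm]
        apply Finset.card_bij' (fun h _ => h ∘ Fin.succ)
          (fun h' _ => Fin.cons (M+1 - ∑ i, h' i) h')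
        · intro a ha
          simp only [Finset.mem_filter, Fintype.mem_piFinset, Finset.mem_Iic, P2] at ha ⊢
          obtain ⟨hb, h1, h2⟩ := ha
          have hsum : ∑ i, a i = a 0 + ∑ i : Fin N, a i.succ := Fin.sum_univ_succ a
          have hwt : ∑ i, (i.1+1) * a i
              = a 0 + (∑ i : Fin N, a i.succ + ∑ i : Fin N, (i.1+1) * a i.succ) := by
            rw [Fin.sum_univ_succ]
            simp only [Fin.val_zero, Fin.val_succ]
            rw [← Finset.sum_add_distrib]
            congr 1
            · omega
            · apply Finset.sum_congr rfl; intro i _; ring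
          simp only [Function.comp_apply]
          constructor
          · intro i
            calc a i.succ ≤ ∑ j : Fin N, a j.succ :=
                Finset.single_le_sum (f := fun j : Fin N => a j.succ)
                  (fun j _ => Nat.zero_le _) (Finset.mem_univ i)
            _ ≤ M+1 := by omega
          · exact ⟨by omega, by omega⟩
        · intro b hb
          simp only [Finset.mem_filter, Fintype.mem_piFinset, Finset.mem_Iic, P2] at hb ⊢
          obtain ⟨hbb, h1, h2⟩ := hb
          have hsum : ∑ i, (Fin.cons (M+1 - ∑ i, b i) b : Fin (N+1) → ℕ) i
              = (M+1 - ∑ i, b i) + ∑ i : Fin N, b i := by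
            rw [Fin.sum_univ_succ]; simp
          have hwt : ∑ i, (i.1+1) * (Fin.cons (M+1 - ∑ i, b i) b : Fin (N+1) → ℕ) i
              = (M+1 - ∑ i, b i) + (∑ i : Fin N, b i + ∑ i : Fin N, (i.1+1) * b i) := by
            rw [Fin.sum_univ_succ]
            simp only [Fin.cons_zero, Fin.cons_succ, Fin.val_zero, Fin.val_succ]
            rw [← Finset.sum_add_distrib]
            congr 1
            · omega
            · apply Finset.sum_congr rfl; intro i _; ring
          refine ⟨?_, by omega, by omega⟩
          intro i
          refine Fin.cases ?_ ?_ i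
          · simpa using Nat.sub_le _ _
          · intro j; simpa using hbb j
        · intro a ha
          simp only [Finset.mem_filter, Fintype.mem_piFinset, Finset.mem_Iic, P2] at ha
          obtain ⟨hb, h1, h2⟩ := ha
          have hsum : ∑ i, a i = a 0 + ∑ i : Fin N, a i.succ := Fin.sum_univ_succ a
          funext i
          refine Fin.cases ?_ ?_ i
          · simp only [Fin.cons_zero, Function.comp_apply]
            omega
          · intro j; simp
        · intro b hb
          funext i
          simp
      · rw [if_neg hm]
        apply Finset.card_eq_zero.2
        apply Finset.filter_false_of_mem
        intro h _
        simp only [P2]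
        rintro ⟨h1, h2⟩
        have : (∑ i, h i) ≤ ∑ i, (i.1+1) * h i := by
          apply Finset.sum_le_sum
          intro i _
          exact Nat.le_mul_of_pos_left _ (Nat.succ_pos _)
        omega
  · -- disjoint
    rw [Finset.disjoint_filter]
    intro h _ h1 h2
    simp only [P1, P2] at h1 h2 ⊢
    omega

lemma Box_zero_left (M : ℕ) : Box 0 M = 1 := by
  ext m
  rw [Box, PowerSeries.coeff_mk, boxCount_zero_left, PowerSeries.coeff_one]
  split_ifs <;> simp

lemma Box_zero_right (N : ℕ) : Box N 0 = 1 := by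
  ext m
  rw [Box, PowerSeries.coeff_mk, boxCount_zero_right, PowerSeries.coeff_one]
  split_ifs <;> simp

lemma Box_rec (N M : ℕ) :
    Box (N+1) (M+1) = Box (N+1) M + X^(M+1) * Box N (M+1) := by
  ext m
  rw [map_add, Box, Box, Box, PowerSeries.coeff_mk, PowerSeries.coeff_mk,
    PowerSeries.coeff_X_pow_mul', boxCount_rec]
  push_cast
  split_ifs with h
  · rw [PowerSeries.coeff_mk]
  · simp

lemma Box_id (N : ℕ) : ∀ M, Box N M * ∏ i ∈ Finset.range N, (1 - X^(i+1))
    = ∏ i ∈ Finset.range N, (1 - (X : PowerSeries ℤ)^(M+i+1)) := by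
  induction N with
  | zero => intro M; simp [Box_zero_left]
  | succ N ihN =>
    intro M
    induction M with
    | zero =>
      rw [Box_zero_right, one_mul]
      exact Finset.prod_congr rfl (fun i _ => by rw [Nat.zero_add])
    | succ M ihM =>
      rw [Box_rec, add_mul, ihM]
      have h2 : (X:PowerSeries ℤ)^(M+1) * Box N (M+1) * ∏ i ∈ Finset.range (N+1), (1 - X^(i+1))
          = X^(M+1) * (1 - X^(N+1)) * ∏ i ∈ Finset.range N, (1 - X^(M+i+2)) := by
        rw [Finset.prod_range_succ, ← mul_assoc]
        have hN := ihN (M+1)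
        have hre : (∏ i ∈ Finset.range N, (1 - (X:PowerSeries ℤ)^(M+1+i+1)))
            = ∏ i ∈ Finset.range N, (1 - (X:PowerSeries ℤ)^(M+i+2)) :=
          Finset.prod_congr rfl (fun i _ => by rw [show M+1+i+1 = M+i+2 by ring])
        calc X ^ (M + 1) * Box N (M + 1) * (∏ x ∈ Finset.range N, (1 - (X:PowerSeries ℤ) ^ (x + 1)))
              * (1 - X ^ (N + 1))
            = X^(M+1) * (Box N (M+1) * ∏ i ∈ Finset.range N, (1 - X^(i+1))) * (1 - X^(N+1)) := by
              ring
          _ = X^(M+1) * (∏ i ∈ Finset.range N, (1 - X^(M+1+i+1))) * (1 - X^(N+1)) := by rw [hN]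
          _ = X^(M+1) * (1 - X^(N+1)) * ∏ i ∈ Finset.range N, (1 - X^(M+i+2)) := by
              rw [hre]; ring
      rw [h2]
      have h1 : (∏ i ∈ Finset.range (N+1), (1 - (X:PowerSeries ℤ)^(M+i+1)))
          = (∏ i ∈ Finset.range N, (1 - (X:PowerSeries ℤ)^(M+i+2))) * (1 - X^(M+1)) := by
        have ha : (∏ i ∈ Finset.range N, (1 - (X:PowerSeries ℤ)^(M+(i+1)+1)))
            = ∏ i ∈ Finset.range N, (1 - (X:PowerSeries ℤ)^(M+i+2)) :=
          Finset.prod_congr rfl (fun i _ => by rw [show M+(i+1)+1 = M+i+2 by ring])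
        rw [Finset.prod_range_succ', ha]
      have h3 : (∏ i ∈ Finset.range (N+1), (1 - (X:PowerSeries ℤ)^(M+1+i+1)))
          = (∏ i ∈ Finset.range N, (1 - (X:PowerSeries ℤ)^(M+i+2))) * (1 - X^(M+N+2)) := by
        have hb : (∏ i ∈ Finset.range N, (1 - (X:PowerSeries ℤ)^(M+1+i+1)))
            = ∏ i ∈ Finset.range N, (1 - (X:PowerSeries ℤ)^(M+i+2)) :=
          Finset.prod_congr rfl (fun i _ => by rw [show M+1+i+1 = M+i+2 by ring])
        rw [Finset.prod_range_succ, show M+1+N+1 = M+N+2 by ring, hb]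
      rw [h1, h3]
      have hx : (X:PowerSeries ℤ)^(M+N+2) = X^(M+1) * X^(N+1) := by
        rw [← pow_add]; congr 1; ring
      rw [hx]
      ring

lemma gf_eq (M N : ℕ) (hN : 0 < N) :
    (∏ i : Fin N, geomB (i.1+1) (M+N-1-i.1))
      = (∏ i : Fin (N-1), geomB (M+i.1+1) (N-1-i.1)) * Box N M := by
  set U : PowerSeries ℤ := ∏ i ∈ Finset.range N, (1 - X^(i+1)) with hUdef
  have hU0 : constantCoeff U = 1 := by
    rw [hUdef, map_prod]
    apply Finset.prod_eq_one
    intro i _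
    rw [map_sub, map_one, map_pow, constantCoeff_X, zero_pow (Nat.succ_ne_zero i), sub_zero]
  have hU : U ≠ 0 := by
    intro h
    rw [h, map_zero] at hU0
    exact one_ne_zero hU0.symm
  apply mul_right_cancel₀ hU
  -- LHS
  have hL : (∏ i : Fin N, geomB (i.1+1) (M+N-1-i.1)) * U
      = ∏ i ∈ Finset.range N, (1 - (X:PowerSeries ℤ)^((i+1)*(M+N-i))) := by
    rw [Fin.prod_univ_eq_prod_range (fun k => geomB (k+1) (M+N-1-k)) N, hUdef,
      ← Finset.prod_mul_distrib]
    apply Finset.prod_congr rfl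
    intro i hi
    have hi' : i < N := Finset.mem_range.1 hi
    rw [geomB_mul, show M+N-1-i+1 = M+N-i by omega]
  -- RHS
  have hR : ((∏ i : Fin (N-1), geomB (M+i.1+1) (N-1-i.1)) * Box N M) * U
      = (∏ i ∈ Finset.range (N-1), (1 - (X:PowerSeries ℤ)^((M+i+1)*(N-i))))
        * (1 - X^(M+N)) := by
    rw [mul_assoc, Box_id N M,
      show N = (N-1)+1 by omega]
    rw [Finset.prod_range_succ, show (N-1)+1 = N by omega,
      show M+(N-1)+1 = M+N by omega,
      Fin.prod_univ_eq_prod_range (fun k => geomB (M+k+1) (N-1-k)) (N-1),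
      ← mul_assoc, ← Finset.prod_mul_distrib]
    congr 1
    apply Finset.prod_congr rfl
    intro i hi
    have hi' : i < N-1 := Finset.mem_range.1 hi
    rw [geomB_mul, show N-1-i+1 = N-i by omega]
  rw [hL, hR]
  rw [← Finset.prod_range_reflect (fun i => 1 - (X:PowerSeries ℤ)^((i+1)*(M+N-i))) N]
  have : ∀ j ∈ Finset.range N, (1 - (X:PowerSeries ℤ)^((N-1-j+1)*(M+N-(N-1-j))))
      = 1 - (X:PowerSeries ℤ)^((N-j)*(M+j+1)) := by
    intro j hj
    have hj' : j < N := Finset.mem_range.1 hj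
    rw [show N-1-j+1 = N-j by omega, show M+N-(N-1-j) = M+j+1 by omega]
  rw [Finset.prod_congr rfl this,
    show N = (N-1)+1 by omega, Finset.prod_range_succ, show (N-1)+1 = N by omega]
  congr 1
  · apply Finset.prod_congr rfl
    intro i hi
    have hi' : i < N-1 := Finset.mem_range.1 hi
    rw [show (N-i)*(M+i+1) = (M+i+1)*(N-i) by ring]
  · rw [show N-(N-1) = 1 by omega, one_mul, show M+(N-1)+1 = M+N by omega]

/-- partial (tail) sums -/
def Ssum {N : ℕ} (g : Fin N → ℕ) (j : Fin N) : ℕ := ∑ i, if j.1 ≤ i.1 then g i else 0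

/-- successive differences -/
def Fdiff {N : ℕ} (d : Fin N → ℕ) (j : Fin N) : ℕ :=
  d j - (if h : j.1 + 1 < N then d ⟨j.1+1, h⟩ else 0)

lemma Ssum_step {N : ℕ} (g : Fin N → ℕ) (j : Fin N) :
    Ssum g j = g j + (if h : j.1+1 < N then Ssum g ⟨j.1+1, h⟩ else 0) := by
  unfold Ssum
  split_ifs with h
  · have hpt : ∀ i : Fin N, (if j.1 ≤ i.1 then g i else 0)
        = (if i = j then g i else 0) + (if j.1+1 ≤ i.1 then g i else 0) := by
      intro i
      by_cases hij : i = j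
      · subst hij
        rw [if_pos (le_refl _), if_pos rfl, if_neg (by omega)]
        omega
      · have hne : i.1 ≠ j.1 := fun hv => hij (Fin.ext hv)
        split_ifs <;> omega
    rw [Finset.sum_congr rfl (fun i _ => hpt i), Finset.sum_add_distrib]
    congr 1
    rw [Finset.sum_ite_eq' Finset.univ j g, if_pos (Finset.mem_univ j)]
  · have hpt : ∀ i : Fin N, (if j.1 ≤ i.1 then g i else 0)
        = (if i = j then g i else 0) := by
      intro i
      have hiN : i.1 < N := i.isLt
      by_cases hij : i = j
      · subst hij; rw [if_pos (le_refl _), if_pos rfl]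
      · have hne : i.1 ≠ j.1 := fun hv => hij (Fin.ext hv)
        have hjN : j.1 < N := j.isLt
        rw [if_neg (by omega), if_neg hij]
    rw [Finset.sum_congr rfl (fun i _ => hpt i),
      Finset.sum_ite_eq' Finset.univ j g, if_pos (Finset.mem_univ j), Nat.add_zero]

lemma sum_Ssum {N : ℕ} (g : Fin N → ℕ) :
    ∑ j, Ssum g j = ∑ i, (i.1+1) * g i := by
  unfold Ssum
  rw [Finset.sum_comm]
  apply Finset.sum_congr rfl
  intro i _
  have h1 : ∀ j : Fin N, (if j.1 ≤ i.1 then g i else 0)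
      = (if j.1 ≤ i.1 then 1 else 0) * g i := by
    intro j; split_ifs <;> omega
  rw [Finset.sum_congr rfl (fun j _ => h1 j), ← Finset.sum_mul]
  congr 1
  rw [Fin.sum_univ_eq_sum_range (fun k => if k ≤ i.1 then 1 else 0) N]
  rw [← Finset.sum_filter]
  have : Finset.filter (fun k => k ≤ i.1) (Finset.range N) = Finset.range (i.1+1) := by
    ext k
    simp only [Finset.mem_filter, Finset.mem_range]
    have := i.isLt
    omega
  rw [this, Finset.sum_const, Finset.card_range, smul_eq_mul, Nat.mul_one]

lemma Fdiff_Ssum {N : ℕ} (g : Fin N → ℕ) : Fdiff (Ssum g) = g := by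
  funext j
  unfold Fdiff
  rw [Ssum_step g j]
  split_ifs with h <;> omega

lemma Ssum_Fdiff {N : ℕ} (d : Fin N → ℕ)
    (hm : ∀ j : Fin N, (if h : j.1+1 < N then d ⟨j.1+1, h⟩ else 0) ≤ d j) :
    Ssum (Fdiff d) = d := by
  have key : ∀ k : ℕ, ∀ j : Fin N, N - 1 - j.1 ≤ k → Ssum (Fdiff d) j = d j := by
    intro k
    induction k with
    | zero =>
      intro j hj
      have hjN : j.1 < N := j.isLt
      have hlast : ¬ (j.1 + 1 < N) := by omega
      rw [Ssum_step, dif_neg hlast, Nat.add_zero]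
      unfold Fdiff
      rw [dif_neg hlast]
      omega
    | succ k ih =>
      intro j hj
      by_cases h : j.1 + 1 < N
      · rw [Ssum_step, dif_pos h, ih ⟨j.1+1, h⟩ (by simp; omega)]
        have := hm j
        rw [dif_pos h] at this
        unfold Fdiff
        rw [dif_pos h]
        omega
      · have hjN : j.1 < N := j.isLt
        rw [Ssum_step, dif_neg h, Nat.add_zero]
        unfold Fdiff
        rw [dif_neg h]
        omega
  funext j
  exact key (N - 1 - j.1) j (le_refl _)

lemma Ssum_le {N : ℕ} (g : Fin N → ℕ) (j : Fin N) : Ssum g j ≤ ∑ i, g i := by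
  unfold Ssum
  apply Finset.sum_le_sum
  intro i _
  split_ifs <;> omega

lemma Ssum_zero {N : ℕ} (g : Fin N → ℕ) (h0 : 0 < N) : Ssum g ⟨0, h0⟩ = ∑ i, g i := by
  unfold Ssum
  apply Finset.sum_congr rfl
  intro i _
  rw [if_pos (Nat.zero_le _)]

lemma Ssum_anti {N : ℕ} (g : Fin N → ℕ) (j j' : Fin N) (hjj : j.1 ≤ j'.1) :
    Ssum g j' ≤ Ssum g j := by
  unfold Ssum
  apply Finset.sum_le_sum
  intro i _
  split_ifs <;> omega

lemma lhs_card (M N n : ℕ) (hN : 0 < N) :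
    {d : Fin N → ℕ | (∑ j, d j) = n ∧
        ∀ j : Fin N,
          (if h : j.1 + 1 < N then d ⟨j.1 + 1, h⟩ else 0) ≤ d j ∧
          d j - (if h : j.1 + 1 < N then d ⟨j.1 + 1, h⟩ else 0) ≤
            M + N - (j.1 + 1)}.ncard
    = cnt (fun i : Fin N => i.1+1) (fun i => M+N-1-i.1) n := by
  classical
  set Gfin := ((Fintype.piFinset (fun i : Fin N => Finset.Iic (M+N-1-i.1))).filter
    (fun g : Fin N → ℕ => ∑ i, (i.1+1) * g i = n)) with hGfin
  have himg : {d : Fin N → ℕ | (∑ j, d j) = n ∧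
        ∀ j : Fin N,
          (if h : j.1 + 1 < N then d ⟨j.1 + 1, h⟩ else 0) ≤ d j ∧
          d j - (if h : j.1 + 1 < N then d ⟨j.1 + 1, h⟩ else 0) ≤
            M + N - (j.1 + 1)} = Ssum '' ↑Gfin := by
    ext d
    simp only [Set.mem_setOf_eq, Set.mem_image, Finset.mem_coe, hGfin,
      Finset.mem_filter, Fintype.mem_piFinset, Finset.mem_Iic]
    constructor
    · rintro ⟨hsum, hcond⟩
      refine ⟨Fdiff d, ⟨⟨?_, ?_⟩, ?_⟩⟩
      · intro j
        have h2 := (hcond j).2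
        have hjN : j.1 < N := j.isLt
        unfold Fdiff
        omega
      · rw [← sum_Ssum, Ssum_Fdiff d (fun j => (hcond j).1)]
        exact hsum
      · exact Ssum_Fdiff d (fun j => (hcond j).1)
    · rintro ⟨g, ⟨⟨hb, hw⟩, rfl⟩⟩
      refine ⟨by rw [sum_Ssum]; exact hw, ?_⟩
      intro j
      have hjN : j.1 < N := j.isLt
      have hs := Ssum_step g j
      have hbj := hb j
      constructor
      · omega
      · omega
  have hinj : Set.InjOn (Ssum (N := N)) ↑Gfin := by
    intro g _ g' _ hgg
    calc g = Fdiff (Ssum g) := (Fdiff_Ssum g).symm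
      _ = Fdiff (Ssum g') := by rw [hgg]
      _ = g' := Fdiff_Ssum g'
  rw [himg, Set.ncard_image_of_injOn hinj, Set.ncard_coe_finset]
  rfl

/-! ### padded parts -/

def padded (N : ℕ) (p : Partn) : Fin N → ℕ := fun j => p.parts.getD j.1 0

lemma ofFn_padded (N : ℕ) (p : Partn) (hlen : p.len ≤ N) :
    List.ofFn (padded N p) = p.parts ++ List.replicate (N - p.parts.length) 0 := by
  have hlen' : p.parts.length ≤ N := hlen
  apply List.ext_getElem
  · simp only [List.length_ofFn, List.length_append, List.length_replicate]
    omega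
  · intro j h1 h2
    rw [List.getElem_ofFn]
    show p.parts.getD j 0 = _
    rcases Nat.lt_or_ge j p.parts.length with hj | hj
    · rw [List.getD_eq_getElem _ _ hj, List.getElem_append_left hj]
    · rw [List.getD_eq_default _ _ hj, List.getElem_append_right hj,
        List.getElem_replicate]

lemma sorted_split (L : List ℕ) (hs : L.Pairwise (· ≥ ·)) :
    L = L.filter (fun v => decide (0 < v)) ++
      List.replicate (L.length - (L.filter (fun v => decide (0 < v))).length) 0 := by
  induction L with
  | nil => simp
  | cons a t ih =>
    by_cases ha : 0 < a
    · rw [List.filter_cons_of_pos (by simpa using ha), List.cons_append,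
        List.length_cons, List.length_cons]
      have harith : t.length + 1 - ((t.filter (fun v => decide (0 < v))).length + 1)
          = t.length - (t.filter (fun v => decide (0 < v))).length := by omega
      rw [harith]
      exact congrArg (a :: ·) (ih hs.of_cons)
    · have ha0 : a = 0 := by omega
      subst ha0
      have hall : ∀ x ∈ (0 : ℕ) :: t, x = 0 := by
        intro x hx
        rcases List.mem_cons.1 hx with rfl | hx'
        · rfl
        · have := (List.pairwise_cons.1 hs).1 x hx'
          omega
      have hf : List.filter (fun v => decide (0 < v)) ((0:ℕ) :: t) = [] := by
        rw [List.filter_eq_nil_iff]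
        intro x hx
        simp [hall x hx]
      rw [hf, List.nil_append, List.length_nil, Nat.sub_zero]
      exact List.eq_replicate_iff.2 ⟨rfl, hall⟩

lemma parts_eq_filter (N : ℕ) (p : Partn) (hlen : p.len ≤ N) :
    (List.ofFn (padded N p)).filter (fun v => decide (0 < v)) = p.parts := by
  have h1 : p.parts.filter (fun v => decide (0 < v)) = p.parts :=
    List.filter_eq_self.2 (fun v hv => by simpa using p.pos v hv)
  have h2 : (List.replicate (N - p.parts.length) (0:ℕ)).filter (fun v => decide (0 < v))
      = [] := by
    rw [List.filter_eq_nil_iff]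
    intro x hx
    simp [List.eq_of_mem_replicate hx]
  rw [ofFn_padded N p hlen, List.filter_append, h1, h2, List.append_nil]

lemma padded_anti (N : ℕ) (p : Partn) (j j' : Fin N) (hjj : j.1 ≤ j'.1) :
    padded N p j' ≤ padded N p j := by
  unfold padded
  rcases Nat.lt_or_ge j'.1 p.parts.length with h' | h'
  · have hj : j.1 < p.parts.length := by omega
    rw [List.getD_eq_getElem _ _ h', List.getD_eq_getElem _ _ hj]
    rcases Nat.eq_or_lt_of_le hjj with heq | hlt
    · apply le_of_eq
      congr 1
      omega
    · exact (List.pairwise_iff_getElem.1 p.sorted) j.1 j'.1 hj h' hlt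
  · rw [List.getD_eq_default _ _ h']
    exact Nat.zero_le _

lemma wt_eq_sum_padded (N : ℕ) (p : Partn) (hlen : p.len ≤ N) :
    p.wt = ∑ j, padded N p j := by
  rw [← List.sum_ofFn, ofFn_padded N p hlen, List.sum_append, List.sum_replicate,
    smul_zero, Nat.add_zero]
  rfl

lemma padded_zero_le (N : ℕ) (p : Partn) (h0 : 0 < N) (M : ℕ)
    (hp : ∀ x ∈ p.parts, x ≤ M) : padded N p ⟨0, h0⟩ ≤ M := by
  unfold padded
  rcases Nat.lt_or_ge 0 p.parts.length with hl | hl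
  · rw [List.getD_eq_getElem _ _ hl]
    exact hp _ (List.getElem_mem hl)
  · rw [List.getD_eq_default _ _ hl]
    exact Nat.zero_le _

lemma Partn.ext' {p q : Partn} (h : p.parts = q.parts) : p = q := by
  cases p; cases q; simpa using h

lemma Partn.eq_of_count {p q : Partn} (h : ∀ v, p.parts.count v = q.parts.count v) :
    p = q := by
  haveI : IsAntisymm ℕ (· ≥ ·) := ⟨fun a b h1 h2 => le_antisymm h2 h1⟩
  exact Partn.ext' ((List.perm_iff_count.2 h).eq_of_pairwise' p.sorted q.sorted)

/-! ### partn from antitone function -/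

def partnOfFn {N : ℕ} (d : Fin N → ℕ)
    (hanti : ∀ j j' : Fin N, j.1 ≤ j'.1 → d j' ≤ d j) : Partn where
  parts := (List.ofFn d).filter (fun v => decide (0 < v))
  sorted := by
    apply List.Pairwise.filter
    rw [List.pairwise_ofFn]
    intro i j hij
    exact hanti i j (le_of_lt hij)
  pos := by
    intro v hv
    simpa using (List.mem_filter.1 hv).2

lemma partnOfFn_len {N : ℕ} (d : Fin N → ℕ) (hanti) :
    (partnOfFn d hanti).len ≤ N := by
  have := List.length_filter_le (fun v => decide (0 < v)) (List.ofFn d)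
  simpa [partnOfFn, Partn.len] using this

lemma partnOfFn_padded {N : ℕ} (d : Fin N → ℕ) (hanti) :
    padded N (partnOfFn d hanti) = d := by
  set q := partnOfFn d hanti with hq
  have hsorted : (List.ofFn d).Pairwise (· ≥ ·) := by
    rw [List.pairwise_ofFn]
    intro i j hij
    exact hanti i j (le_of_lt hij)
  have hsplit := sorted_split (List.ofFn d) hsorted
  have hqparts : q.parts = (List.ofFn d).filter (fun v => decide (0 < v)) := rfl
  have hlenq : q.parts.length ≤ N := partnOfFn_len d hanti
  funext j
  unfold padded
  have hj : j.1 < (List.ofFn d).length := by rw [List.length_ofFn]; exact j.isLt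
  have hdj : (List.ofFn d)[j.1] = d j := by
    rw [List.getElem_ofFn]
  set l := List.filter (fun v => decide (0 < v)) (List.ofFn d) with hldef
  rw [← hdj, List.getElem_of_eq hsplit hj, hqparts]
  rcases Nat.lt_or_ge j.1 l.length with hjl | hjl
  · rw [List.getD_eq_getElem _ _ hjl, List.getElem_append_left hjl]
  · rw [List.getD_eq_default _ _ hjl, List.getElem_append_right hjl,
      List.getElem_replicate]

/-! ### repList -/

def repList (M : ℕ) : (K : ℕ) → (Fin K → ℕ) → List ℕ
  | 0, _ => []
  | K+1, x => List.replicate (x (Fin.last K)) (M+K+1) ++ repList M K (fun i => x i.castSucc)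

lemma repList_mem (M : ℕ) : ∀ (K : ℕ) (x : Fin K → ℕ) (v : ℕ),
    v ∈ repList M K x → M+1 ≤ v ∧ v ≤ M+K := by
  intro K
  induction K with
  | zero => intro x v hv; simp [repList] at hv
  | succ K ih =>
    intro x v hv
    rw [repList, List.mem_append] at hv
    rcases hv with hv | hv
    · have := List.eq_of_mem_replicate hv
      omega
    · have := ih _ v hv
      omega

lemma repList_sorted (M : ℕ) : ∀ (K : ℕ) (x : Fin K → ℕ),
    (repList M K x).Pairwise (· ≥ ·) := by
  intro K
  induction K with
  | zero => intro x; simp [repList]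
  | succ K ih =>
    intro x
    rw [repList, List.pairwise_append]
    refine ⟨?_, ih _, ?_⟩
    · exact List.pairwise_replicate.2 (Or.inr (le_refl _))
    · intro a ha b hb
      have ha' := List.eq_of_mem_replicate ha
      have hb' := repList_mem M K _ b hb
      omega

lemma repList_count_ne (M : ℕ) : ∀ (K : ℕ) (x : Fin K → ℕ) (v : ℕ),
    (∀ i : Fin K, v ≠ M+i.1+1) → (repList M K x).count v = 0 := by
  intro K
  induction K with
  | zero => intro x v _; simp [repList]
  | succ K ih =>
    intro x v hv
    rw [repList, List.count_append, List.count_replicate, if_neg, ih, Nat.add_zero]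
    · intro i
      exact hv i.castSucc
    · have := hv (Fin.last K)
      simp only [Fin.val_last] at this
      simpa using fun h => this (by omega)

lemma repList_count_eq (M : ℕ) : ∀ (K : ℕ) (x : Fin K → ℕ) (i : Fin K),
    (repList M K x).count (M+i.1+1) = x i := by
  intro K
  induction K with
  | zero => intro x i; exact i.elim0
  | succ K ih =>
    intro x i
    rw [repList, List.count_append]
    by_cases hi : i.1 = K
    · rw [repList_count_ne M K _ _ (fun j => by have := j.isLt; omega),
        List.count_replicate, if_pos (by simp; omega), Nat.add_zero]
      congr 1
      exact Fin.ext (by simp [hi])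
    · have hiK : i.1 < K := by have := i.isLt; omega
      have := ih (fun j => x j.castSucc) ⟨i.1, hiK⟩
      simp only at this
      rw [List.count_replicate, if_neg (by simp; omega), Nat.zero_add]
      calc (repList M K fun j => x j.castSucc).count (M+i.1+1)
          = x (Fin.castSucc ⟨i.1, hiK⟩) := this
        _ = x i := by apply congrArg; exact Fin.ext rfl

lemma repList_sum (M : ℕ) : ∀ (K : ℕ) (x : Fin K → ℕ),
    (repList M K x).sum = ∑ i : Fin K, (M+i.1+1) * x i := by
  intro K
  induction K with
  | zero => intro x; simp [repList]
  | succ K ih =>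
    intro x
    rw [repList, List.sum_append, List.sum_replicate, ih, Fin.sum_univ_castSucc]
    simp only [Fin.coe_castSucc, Fin.val_last, smul_eq_mul]
    ring

def piPartn (M K : ℕ) (x : Fin K → ℕ) : Partn :=
  ⟨repList M K x, repList_sorted M K x,
    fun v hv => by have := repList_mem M K x v hv; omega⟩

def muPartn {N : ℕ} (h : Fin N → ℕ) : Partn :=
  partnOfFn (Ssum h) (fun j j' hjj => Ssum_anti h j j' hjj)

lemma muPartn_padded {N : ℕ} (h : Fin N → ℕ) : padded N (muPartn h) = Ssum h :=
  partnOfFn_padded _ _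

lemma muPartn_len {N : ℕ} (h : Fin N → ℕ) : (muPartn h).len ≤ N :=
  partnOfFn_len _ _

lemma muPartn_wt {N : ℕ} (h : Fin N → ℕ) :
    (muPartn h).wt = ∑ i, (i.1+1) * h i := by
  rw [wt_eq_sum_padded N _ (muPartn_len h), muPartn_padded, sum_Ssum]

lemma muPartn_parts_le {N : ℕ} (h : Fin N → ℕ) (v : ℕ)
    (hv : v ∈ (muPartn h).parts) : v ≤ ∑ i, h i := by
  have hv' : v ∈ List.ofFn (Ssum h) := (List.mem_filter.1 hv).1
  obtain ⟨j, hj⟩ := List.mem_ofFn.1 hv'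
  rw [← hj]
  exact Ssum_le h j

lemma rhs_card (M N n : ℕ) (hN : 0 < N) :
    {q : Partn × Partn | q.1.wt + q.2.wt = n ∧
        (∀ x ∈ q.1.parts, M + 1 ≤ x ∧ x ≤ M + N - 1) ∧
        (∀ i, 1 ≤ i → i ≤ N - 1 → q.1.parts.count (M + i) ≤ N - i) ∧
        q.2.len ≤ N ∧ (∀ x ∈ q.2.parts, x ≤ M)}.ncard
    = ∑ ab ∈ Finset.HasAntidiagonal.antidiagonal n,
        (cnt (fun i : Fin (N-1) => M+i.1+1) (fun i => N-1-i.1) ab.1)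
          * boxCount N M ab.2 := by
  set Xfin : ℕ → Finset (Fin (N-1) → ℕ) := fun a =>
    ((Fintype.piFinset (fun i : Fin (N-1) => Finset.Iic (N-1-i.1))).filter
      (fun x : Fin (N-1) → ℕ => ∑ i, (M+i.1+1) * x i = a)) with hXfin
  set Hfin : ℕ → Finset (Fin N → ℕ) := fun b =>
    ((Fintype.piFinset (fun _ : Fin N => Finset.Iic M)).filter
      (fun h : Fin N → ℕ => (∑ i, h i) ≤ M ∧ ∑ i, (i.1+1) * h i = b)) with hHfin
  set PF : Finset ((Fin (N-1) → ℕ) × (Fin N → ℕ)) :=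
    (Finset.HasAntidiagonal.antidiagonal n).biUnion (fun ab => Xfin ab.1 ×ˢ Hfin ab.2) with hPF
  have hXmem : ∀ a (x : Fin (N-1) → ℕ),
      x ∈ Xfin a ↔ ((∀ i, x i ≤ N-1-i.1) ∧ ∑ i, (M+i.1+1) * x i = a) := by
    intro a x
    simp [hXfin, Fintype.mem_piFinset]
  have hHmem : ∀ b (h : Fin N → ℕ),
      h ∈ Hfin b ↔ ((∀ i, h i ≤ M) ∧ (∑ i, h i) ≤ M ∧ ∑ i, (i.1+1) * h i = b) := by
    intro b h
    simp [hHfin, Fintype.mem_piFinset]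
  have hcard : PF.card
      = ∑ ab ∈ Finset.HasAntidiagonal.antidiagonal n, (Xfin ab.1).card * (Hfin ab.2).card := by
    rw [hPF, Finset.card_biUnion]
    · exact Finset.sum_congr rfl (fun ab _ => Finset.card_product _ _)
    · intro ab _ cd _ hne
      rw [Function.onFun, Finset.disjoint_left]
      rintro ⟨x, h⟩ hxab hxcd
      rw [Finset.mem_product] at hxab hxcd
      apply hne
      have h1 := ((hXmem _ x).1 hxab.1).2
      have h2 := ((hXmem _ x).1 hxcd.1).2
      have h3 := ((hHmem _ h).1 hxab.2).2.2
      have h4 := ((hHmem _ h).1 hxcd.2).2.2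
      exact Prod.ext_iff.2 ⟨by omega, by omega⟩
  set Ψ : ((Fin (N-1) → ℕ) × (Fin N → ℕ)) → Partn × Partn :=
    fun xh => (piPartn M (N-1) xh.1, muPartn xh.2) with hΨ
  have hset : {q : Partn × Partn | q.1.wt + q.2.wt = n ∧
        (∀ x ∈ q.1.parts, M + 1 ≤ x ∧ x ≤ M + N - 1) ∧
        (∀ i, 1 ≤ i → i ≤ N - 1 → q.1.parts.count (M + i) ≤ N - i) ∧
        q.2.len ≤ N ∧ (∀ x ∈ q.2.parts, x ≤ M)} = Ψ '' ↑PF := by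
    ext ⟨π, μ⟩
    simp only [Set.mem_setOf_eq, Set.mem_image, Finset.mem_coe]
    constructor
    · rintro ⟨hwt, hbd, hcnt, hlen, hle⟩
      set x : Fin (N-1) → ℕ := fun i => π.parts.count (M+i.1+1) with hx
      set d : Fin N → ℕ := padded N μ with hd
      set h : Fin N → ℕ := Fdiff d with hh
      have hmono : ∀ j : Fin N, (if hj : j.1+1 < N then d ⟨j.1+1, hj⟩ else 0) ≤ d j := by
        intro j
        split_ifs with hj
        · exact padded_anti N μ j ⟨j.1+1, hj⟩ (by simp)
        · exact Nat.zero_le _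
      have hSF : Ssum h = d := Ssum_Fdiff d hmono
      have hperm : π.parts.Perm (repList M (N-1) x) := by
        rw [List.perm_iff_count]
        intro v
        by_cases hv : ∃ i : Fin (N-1), v = M+i.1+1
        · obtain ⟨i, rfl⟩ := hv
          rw [repList_count_eq]
        · rw [repList_count_ne M (N-1) x v (fun i hi => hv ⟨i, hi⟩),
            List.count_eq_zero.2]
          intro hmem
          have hb := hbd v hmem
          exact hv ⟨⟨v-M-1, by omega⟩, by simp; omega⟩
      have hπeq : π = piPartn M (N-1) x :=
        Partn.eq_of_count (fun v => List.perm_iff_count.1 hperm v)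
      have hwtπ : π.wt = ∑ i, (M+i.1+1) * x i := by
        rw [Partn.wt, hperm.sum_eq, repList_sum]
      have hsumh : ∑ i, h i = d ⟨0, hN⟩ := by
        rw [← Ssum_zero h hN, hSF]
      have hd0 : d ⟨0, hN⟩ ≤ M := padded_zero_le N μ hN M hle
      have hwtμ : μ.wt = ∑ i, (i.1+1) * h i := by
        rw [← sum_Ssum, hSF, wt_eq_sum_padded N μ hlen]
      have hμeq : μ = muPartn h := by
        apply Partn.ext'
        show μ.parts = (List.ofFn (Ssum h)).filter (fun v => decide (0 < v))
        rw [hSF, hd, ← parts_eq_filter N μ hlen]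
      have hxmem : x ∈ Xfin π.wt := by
        rw [hXmem]
        constructor
        · intro j
          have hjN := j.isLt
          have := hcnt (j.1+1) (by omega) (by omega)
          rw [hx]
          calc π.parts.count (M+j.1+1) = π.parts.count (M+(j.1+1)) := by ring_nf
            _ ≤ N - (j.1+1) := this
            _ = N-1-j.1 := by omega
        · exact hwtπ.symm
      have hhmem : h ∈ Hfin μ.wt := by
        rw [hHmem]
        refine ⟨?_, by omega, hwtμ.symm⟩
        intro i
        calc h i ≤ ∑ j, h j :=
            Finset.single_le_sum (f := fun j => h j) (fun j _ => Nat.zero_le _)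
              (Finset.mem_univ i)
          _ ≤ M := by omega
      refine ⟨(x, h), ?_, ?_⟩
      · exact Finset.mem_biUnion.2 ⟨(π.wt, μ.wt), Finset.HasAntidiagonal.mem_antidiagonal.2 hwt,
          Finset.mem_product.2 ⟨hxmem, hhmem⟩⟩
      · rw [hΨ]
        exact Prod.ext_iff.2 ⟨hπeq.symm, hμeq.symm⟩
    · rintro ⟨⟨x, h⟩, hmem, hψ⟩
      rw [hPF, Finset.mem_biUnion] at hmem
      obtain ⟨⟨a, b⟩, habmem, hprod⟩ := hmem
      have hab : a + b = n := Finset.HasAntidiagonal.mem_antidiagonal.1 habmem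
      rw [Finset.mem_product] at hprod
      obtain ⟨hxa, hhb⟩ := hprod
      obtain ⟨hxbd, hxwt⟩ := (hXmem a x).1 hxa
      obtain ⟨hhbd, hhsum, hhwt⟩ := (hHmem b h).1 hhb
      have hπ : π = piPartn M (N-1) x := by
        have := congrArg Prod.fst hψ
        simpa [hΨ] using this.symm
      have hμ : μ = muPartn h := by
        have := congrArg Prod.snd hψ
        simpa [hΨ] using this.symm
      subst hπ hμ
      refine ⟨?_, ?_, ?_, ?_, ?_⟩
      · show (piPartn M (N-1) x).wt + (muPartn h).wt = n
        rw [Partn.wt, muPartn_wt]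
        show (repList M (N-1) x).sum + _ = n
        rw [repList_sum, hxwt, hhwt]
        exact hab
      · intro v hv
        have := repList_mem M (N-1) x v hv
        omega
      · intro i h1 h2
        have hidx : i - 1 < N - 1 := by omega
        have hcount : (piPartn M (N-1) x).parts.count (M+i)
            = x ⟨i-1, hidx⟩ := by
          have := repList_count_eq M (N-1) x ⟨i-1, hidx⟩
          simp only at this
          rw [show M+i = M+(i-1)+1 by omega]
          exact this
        rw [hcount]
        calc x ⟨i-1, hidx⟩ ≤ N-1-(i-1) := hxbd _
          _ = N - i := by omega
      · exact partnOfFn_len _ _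
      · intro v hv
        have := muPartn_parts_le h v hv
        omega
  rw [hset]
  have hinj : Set.InjOn Ψ ↑PF := by
    intro ⟨x, h⟩ _ ⟨x', h'⟩ _ heq
    have h1 : piPartn M (N-1) x = piPartn M (N-1) x' := congrArg Prod.fst heq
    have h2 : muPartn h = muPartn h' := congrArg Prod.snd heq
    have hparts : repList M (N-1) x = repList M (N-1) x' := congrArg Partn.parts h1
    have hx : x = x' := by
      funext i
      rw [← repList_count_eq M (N-1) x i, ← repList_count_eq M (N-1) x' i, hparts]
    have hS : Ssum h = Ssum h' := by
      have := congrArg (padded N) h2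
      rwa [muPartn, muPartn, partnOfFn_padded, partnOfFn_padded] at this
    have hh : h = h' := by
      rw [← Fdiff_Ssum h, ← Fdiff_Ssum h', hS]
    rw [Prod.ext_iff]
    exact ⟨hx, hh⟩
  rw [Set.ncard_image_of_injOn hinj, Set.ncard_coe_finset, hcard]
  rfl

end Aux

/-- Theorem 1.8 (restated): the number of nonincreasing sequences
`δ = (δ_1, …, δ_N)` of nonnegative integers summing to `n` with
`0 ≤ δ_i − δ_{i+1} ≤ M + N − i` (convention `δ_{N+1} = 0`), equals the number of
pairs `(π, μ)` with `|π| + |μ| = n`, all parts of `π` in `[M+1, M+N−1]` with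
`M + i` appearing at most `N − i` times, and `μ` having at most `N` parts
each at most `M`. -/
theorem C_eq_D (M N n : ℕ) (hM : 0 < M) (hN : 0 < N) :
    {d : Fin N → ℕ | (∑ j, d j) = n ∧
        ∀ j : Fin N,
          (if h : j.1 + 1 < N then d ⟨j.1 + 1, h⟩ else 0) ≤ d j ∧
          d j - (if h : j.1 + 1 < N then d ⟨j.1 + 1, h⟩ else 0) ≤
            M + N - (j.1 + 1)}.ncard =
      {q : Partn × Partn | q.1.wt + q.2.wt = n ∧
        (∀ x ∈ q.1.parts, M + 1 ≤ x ∧ x ≤ M + N - 1) ∧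
        (∀ i, 1 ≤ i → i ≤ N - 1 → q.1.parts.count (M + i) ≤ N - i) ∧
        q.2.len ≤ N ∧ (∀ x ∈ q.2.parts, x ≤ M)}.ncard := by
  rw [lhs_card M N n hN, rhs_card M N n hN]
  have h1 : ((cnt (fun i : Fin N => i.1+1) (fun i => M+N-1-i.1) n : ℤ))
      = PowerSeries.coeff n (∏ i : Fin N, geomB (i.1+1) (M+N-1-i.1)) :=
    (count_coeff _ _ (fun i => Nat.succ_pos _) n).symm
  have h2 := gf_eq M N hN
  have h3 : PowerSeries.coeff n
      ((∏ i : Fin (N-1), geomB (M+i.1+1) (N-1-i.1)) * Box N M)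
      = ∑ ab ∈ Finset.HasAntidiagonal.antidiagonal n,
          (cnt (fun i : Fin (N-1) => M+i.1+1) (fun i => N-1-i.1) ab.1 : ℤ)
            * boxCount N M ab.2 := by
    rw [PowerSeries.coeff_mul]
    apply Finset.sum_congr rfl
    intro ab _
    rw [count_coeff _ _ (fun i => Nat.succ_pos _) ab.1, Box, PowerSeries.coeff_mk]
  have hfin : ((cnt (fun i : Fin N => i.1+1) (fun i => M+N-1-i.1) n : ℤ))
      = ∑ ab ∈ Finset.HasAntidiagonal.antidiagonal n,
          (cnt (fun i : Fin (N-1) => M+i.1+1) (fun i => N-1-i.1) ab.1 : ℤ)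
            * boxCount N M ab.2 := by
    rw [h1, h2, h3]
  exact_mod_cast hfin
end
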